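/- arXiv:2601.16743 — 9 statements merged into one kernel-verified Lean document; each statement's English description precedes it below -/
import Mathlib

section
/- For all β > 0 and m > 0, setting ω(l,β) = (2l−1)π/β for l ∈ ℤ, the series Σ_{l∈ℤ} ω(l,β)²/(m² + ω(l,β)²)² converges and Σ_{l∈ℤ} ω(l,β)²/(m² + ω(l,β)²)² ≤ β²/4. -/
open Real

/-- The sum of `1/(2k+1)^2` over `ℕ` is `π²/8`. -/
lemma hasSum_odd_sq_inv : HasSum (fun k : ℕ => (1 : ℝ) / (2 * (k : ℝ) + 1) ^ 2) (π ^ 2 / 8) := by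
  have htot : HasSum (fun n : ℕ => (1 : ℝ) / (n : ℝ) ^ 2) (π ^ 2 / 6) := hasSum_zeta_two
  have heven : HasSum (fun k : ℕ => (1 : ℝ) / ((2 * k : ℕ) : ℝ) ^ 2) (π ^ 2 / 24) := by
    have h := htot.mul_left ((1 : ℝ) / 4)
    have hval : π ^ 2 / 24 = (1 : ℝ) / 4 * (π ^ 2 / 6) := by ring
    rw [hval]
    convert h using 1
    · rfl
    funext n
    push_cast
    rcases Nat.eq_zero_or_pos n with h0 | h0
    · simp [h0]
    · have hn : (n : ℝ) ≠ 0 := Nat.cast_ne_zero.mpr h0.ne'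
      field_simp
      ring
  have hinj : Function.Injective (fun k : ℕ => 2 * k + 1) := by
    intro a b h
    have h' : 2 * a + 1 = 2 * b + 1 := h
    omega
  have hos : Summable (fun k : ℕ => (1 : ℝ) / ((2 * k + 1 : ℕ) : ℝ) ^ 2) :=
    htot.summable.comp_injective hinj
  have hcomb := HasSum.even_add_odd (f := fun n : ℕ => (1 : ℝ) / (n : ℝ) ^ 2) heven hos.hasSum
  have huniq : π ^ 2 / 24 + ∑' k : ℕ, (1 : ℝ) / ((2 * k + 1 : ℕ) : ℝ) ^ 2 = π ^ 2 / 6 :=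
    hcomb.unique htot
  have hval : ∑' k : ℕ, (1 : ℝ) / ((2 * k + 1 : ℕ) : ℝ) ^ 2 = π ^ 2 / 8 := by linarith
  have h := hval ▸ hos.hasSum
  convert h using 2 with k
  push_cast
  ring

/-- The sum of `1/(2l-1)^2` over `ℤ` is `π²/4`. -/
lemma hasSum_int_odd_sq_inv :
    HasSum (fun l : ℤ => (1 : ℝ) / (2 * (l : ℝ) - 1) ^ 2) (π ^ 2 / 4) := by
  set f : ℤ → ℝ := fun l => (1 : ℝ) / (2 * (l : ℝ) - 1) ^ 2 with hf
  have hpos : HasSum (fun n : ℕ => f n) (π ^ 2 / 8 + 1) := by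
    have h2 : HasSum (fun n : ℕ => f ((n + 1 : ℕ))) (π ^ 2 / 8) := by
      have := hasSum_odd_sq_inv
      convert this using 2 with k
      simp only [hf]
      push_cast
      ring_nf
    have h3 := (hasSum_nat_add_iff (f := fun n : ℕ => f n) 1).mp h2
    have h4 : (π ^ 2 / 8) + ∑ i ∈ Finset.range 1, f i = π ^ 2 / 8 + 1 := by
      simp [hf]
    rwa [h4] at h3
  have hneg : HasSum (fun n : ℕ => f (-(n + 1))) (π ^ 2 / 8 - 1) := by
    have h2 : HasSum (fun k : ℕ => (1 : ℝ) / (2 * ((k + 1 : ℕ) : ℝ) + 1) ^ 2)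
        (π ^ 2 / 8 - 1) := by
      rw [hasSum_nat_add_iff (f := fun k : ℕ => (1 : ℝ) / (2 * (k : ℝ) + 1) ^ 2) 1]
      convert hasSum_odd_sq_inv using 1
      · rfl
      norm_num
    convert h2 using 2 with n
    simp only [hf]
    push_cast
    ring_nf
  have h := hpos.of_nat_of_neg_add_one hneg
  convert h using 1
  ring

/-- For `β > 0`, `m > 0` and fermionic Matsubara frequencies `ω(l,β) = (2l−1)π/β`, the series
`Σ_{l ∈ ℤ} ω(l,β)²/(m² + ω(l,β)²)²` converges and is bounded by `β²/4`. -/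
theorem stmt2 (β m : ℝ) (hβ : 0 < β) (hm : 0 < m) :
    Summable (fun l : ℤ => ((2 * (l : ℝ) - 1) * Real.pi / β) ^ 2 /
      (m ^ 2 + ((2 * (l : ℝ) - 1) * Real.pi / β) ^ 2) ^ 2) ∧
    (∑' l : ℤ, ((2 * (l : ℝ) - 1) * Real.pi / β) ^ 2 /
      (m ^ 2 + ((2 * (l : ℝ) - 1) * Real.pi / β) ^ 2) ^ 2) ≤ β ^ 2 / 4 := by
  have hπ := Real.pi_pos
  have hπ' : π ≠ 0 := hπ.ne'
  have hβ' : β ≠ 0 := hβ.ne'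
  -- the dominating series
  have hG : HasSum (fun l : ℤ => β ^ 2 / π ^ 2 * ((1 : ℝ) / (2 * (l : ℝ) - 1) ^ 2))
      (β ^ 2 / 4) := by
    have h := hasSum_int_odd_sq_inv.mul_left (β ^ 2 / π ^ 2)
    have hval : β ^ 2 / 4 = β ^ 2 / π ^ 2 * (π ^ 2 / 4) := by
      field_simp
    rw [hval]
    exact h
  -- each `2l-1` is a nonzero real
  have hne : ∀ l : ℤ, (2 * (l : ℝ) - 1) ≠ 0 := by
    intro l h
    have h1 : ((2 * l - 1 : ℤ) : ℝ) = 0 := by push_cast; linarith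
    have h2 : (2 * l - 1 : ℤ) = 0 := by exact_mod_cast h1
    omega
  have hapos : ∀ l : ℤ, 0 < ((2 * (l : ℝ) - 1) * π / β) ^ 2 := by
    intro l
    have hx : (2 * (l : ℝ) - 1) * π / β ≠ 0 :=
      div_ne_zero (mul_ne_zero (hne l) hπ') hβ'
    exact pow_two_pos_of_ne_zero hx
  -- pointwise bound
  have hle : ∀ l : ℤ, ((2 * (l : ℝ) - 1) * π / β) ^ 2 /
      (m ^ 2 + ((2 * (l : ℝ) - 1) * π / β) ^ 2) ^ 2 ≤
      β ^ 2 / π ^ 2 * ((1 : ℝ) / (2 * (l : ℝ) - 1) ^ 2) := by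
    intro l
    have hx : (2 * (l : ℝ) - 1) ≠ 0 := hne l
    set a := ((2 * (l : ℝ) - 1) * π / β) ^ 2 with ha
    have ha0 : 0 < a := hapos l
    have h1 : a / (m ^ 2 + a) ^ 2 ≤ a / a ^ 2 := by
      apply div_le_div_of_nonneg_left ha0.le (by positivity)
      nlinarith [sq_nonneg m, sq_nonneg (m ^ 2 + a)]
    have h2 : a / a ^ 2 = β ^ 2 / π ^ 2 * ((1 : ℝ) / (2 * (l : ℝ) - 1) ^ 2) := by
      rw [ha]
      field_simp
    linarith
  have hnn : ∀ l : ℤ, 0 ≤ ((2 * (l : ℝ) - 1) * π / β) ^ 2 /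
      (m ^ 2 + ((2 * (l : ℝ) - 1) * π / β) ^ 2) ^ 2 := by
    intro l; positivity
  have hsum : Summable (fun l : ℤ => ((2 * (l : ℝ) - 1) * π / β) ^ 2 /
      (m ^ 2 + ((2 * (l : ℝ) - 1) * π / β) ^ 2) ^ 2) :=
    Summable.of_nonneg_of_le hnn hle hG.summable
  refine ⟨hsum, ?_⟩
  calc (∑' l : ℤ, ((2 * (l : ℝ) - 1) * π / β) ^ 2 /
      (m ^ 2 + ((2 * (l : ℝ) - 1) * π / β) ^ 2) ^ 2)
      ≤ ∑' l : ℤ, β ^ 2 / π ^ 2 * ((1 : ℝ) / (2 * (l : ℝ) - 1) ^ 2) :=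
        Summable.tsum_le_tsum hle hsum hG.summable
    _ = β ^ 2 / 4 := hG.tsum_eq
end

section
/- For every a > 0, one has Σ_{n∈ℤ} e^{−a(n−1/2)²} = √(π/a) · (1 + 2 Σ_{n=1}^∞ (−1)ⁿ e^{−π²n²/a}), both series being absolutely convergent. -/
open Real Complex HurwitzZeta

lemma stmt4_aux_int (a : ℝ) (ha : 0 < a) :
    HasSum (fun n : ℤ => Real.exp (-a * ((n : ℝ) - 1 / 2) ^ 2))
      (evenKernel (1 / 2 : ℝ) (a / Real.pi)) := by
  have hπ := Real.pi_pos
  have ht : 0 < a / Real.pi := div_pos ha hπ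
  have h2 := ((Equiv.neg ℤ).hasSum_iff).mpr (hasSum_int_evenKernel (1 / 2 : ℝ) ht)
  convert h2 using 1
  funext n
  simp only [Function.comp_apply, Equiv.neg_apply, Int.cast_neg]
  congr 1
  field_simp
  ring

lemma stmt4_aux_nat (a : ℝ) (ha : 0 < a) :
    HasSum (fun n : ℕ =>
      (-1 : ℝ) ^ (n + 1) * Real.exp (-Real.pi ^ 2 * ((n : ℝ) + 1) ^ 2 / a))
      ((cosKernel (1 / 2 : ℝ) (Real.pi / a) - 1) / 2) := by
  have hπ := Real.pi_pos
  have ht : 0 < Real.pi / a := div_pos hπ ha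
  have h := (hasSum_nat_cosKernel₀ (1 / 2 : ℝ) ht).div_const 2
  convert h using 1
  · rfl
  funext n
  have hc : Real.cos (2 * Real.pi * (1 / 2) * ((n : ℝ) + 1)) = (-1 : ℝ) ^ (n + 1) := by
    have : (2 : ℝ) * Real.pi * (1 / 2) * ((n : ℝ) + 1) = ((n + 1 : ℕ) : ℝ) * Real.pi - 0 := by
      push_cast; ring
    rw [this, Real.cos_nat_mul_pi_sub, Real.cos_zero, mul_one]
  rw [hc]
  have he : -Real.pi * ((n : ℝ) + 1) ^ 2 * (Real.pi / a) =
      -Real.pi ^ 2 * ((n : ℝ) + 1) ^ 2 / a := by ring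
  rw [he]
  ring

/-- Poisson summation formula for the half-integer-shifted Gaussian theta series: for `a > 0`,
`Σ_{n∈ℤ} e^{−a(n−1/2)²} = √(π/a) · (1 + 2 Σ_{n=1}^∞ (−1)ⁿ e^{−π²n²/a})`, both series being
absolutely convergent. -/
theorem stmt4 (a : ℝ) (ha : 0 < a) :
    Summable (fun n : ℤ => Real.exp (-a * ((n : ℝ) - 1 / 2) ^ 2)) ∧
    Summable (fun n : ℕ =>
      (-1 : ℝ) ^ (n + 1) * Real.exp (-Real.pi ^ 2 * ((n : ℝ) + 1) ^ 2 / a)) ∧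
    (∑' n : ℤ, Real.exp (-a * ((n : ℝ) - 1 / 2) ^ 2)) =
      Real.sqrt (Real.pi / a) *
        (1 + 2 * ∑' n : ℕ,
          (-1 : ℝ) ^ (n + 1) * Real.exp (-Real.pi ^ 2 * ((n : ℝ) + 1) ^ 2 / a)) := by
  have hπ := Real.pi_pos
  have h1 := stmt4_aux_int a ha
  have h2 := stmt4_aux_nat a ha
  refine ⟨h1.summable, h2.summable, ?_⟩
  rw [h1.tsum_eq, h2.tsum_eq, evenKernel_functional_equation]
  have hinv : 1 / (a / Real.pi) = Real.pi / a := one_div_div a Real.pi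
  rw [hinv]
  have hsqrt : 1 / (a / Real.pi) ^ (1 / 2 : ℝ) = Real.sqrt (Real.pi / a) := by
    rw [← Real.sqrt_eq_rpow, one_div, ← Real.sqrt_inv, inv_div]
  rw [hsqrt]
  ring
end

section
/- For all α > 0, γ > 0 and every real ν, the integral ∫₀^∞ x^{ν−1} e^{−α/x − γx} dx is finite and equals 2(α/γ)^{ν/2} ∫₀^∞ e^{−2√(αγ)·cosh t} cosh(νt) dt, where the integral on the right is also finite. -/
open MeasureTheory
open Real

lemma cosh_lb (t : ℝ) : t ^ 2 / 8 ≤ Real.cosh t := by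
  have h1 : Real.exp |t| ≤ 2 * Real.cosh t := by
    rcases abs_cases t with ⟨h, _⟩ | ⟨h, _⟩ <;> rw [h, Real.cosh_eq] <;>
      nlinarith [Real.exp_pos t, Real.exp_pos (-t)]
  have h2 := Real.add_one_le_exp (|t| / 2)
  have h3 : Real.exp (|t| / 2) ^ 2 = Real.exp |t| := by
    rw [sq, ← Real.exp_add]; ring_nf
  nlinarith [abs_nonneg t, sq_abs t, Real.exp_pos (|t|/2)]

lemma key_int {b : ℝ} (hb : 0 < b) (μ : ℝ) :
    Integrable (fun t : ℝ => Real.exp (μ * t - b * Real.cosh t)) := by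
  have hb16 : 0 < b / 16 := by positivity
  refine ((integrable_exp_neg_mul_sq hb16).const_mul (Real.exp (4 * μ ^ 2 / b))).mono' ?_ ?_
  · exact (Real.continuous_exp.comp (by continuity)).aestronglyMeasurable
  · filter_upwards with t
    rw [Real.norm_eq_abs, abs_of_pos (Real.exp_pos _), ← Real.exp_add]
    apply Real.exp_le_exp.2
    have h4 : b * (4 * μ ^ 2 / b) = 4 * μ ^ 2 := by field_simp
    nlinarith [sq_nonneg (b * t - 8 * μ), cosh_lb t, mul_pos hb hb, hb]

lemma pt_eq (s ν t : ℝ) :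
    Real.exp (ν * t - 2 * s * Real.cosh t) + Real.exp (-ν * t - 2 * s * Real.cosh t) =
      2 * (Real.exp (-2 * s * Real.cosh t) * Real.cosh (ν * t)) := by
  have h : 2 * (Real.exp (-2 * s * Real.cosh t) * ((Real.exp (ν * t) + Real.exp (-(ν * t))) / 2)) =
      Real.exp (-2 * s * Real.cosh t) * Real.exp (ν * t) +
      Real.exp (-2 * s * Real.cosh t) * Real.exp (-(ν * t)) := by ring
  rw [Real.cosh_eq (ν * t), h, ← Real.exp_add, ← Real.exp_add]
  ring_nf

/-- Sommerfeld representation: for `α, γ > 0` and real `ν`, the integral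
`∫₀^∞ x^{ν−1} e^{−α/x − γx} dx` is finite and equals
`2 (α/γ)^{ν/2} ∫₀^∞ e^{−2√(αγ) cosh t} cosh(νt) dt`, the latter integral also being finite. -/
theorem stmt5 (α γ ν : ℝ) (hα : 0 < α) (hγ : 0 < γ) :
    IntegrableOn (fun x : ℝ => x ^ (ν - 1) * Real.exp (-α / x - γ * x)) (Set.Ioi 0) ∧
    IntegrableOn (fun t : ℝ =>
      Real.exp (-2 * Real.sqrt (α * γ) * Real.cosh t) * Real.cosh (ν * t)) (Set.Ioi 0) ∧
    (∫ x in Set.Ioi (0 : ℝ), x ^ (ν - 1) * Real.exp (-α / x - γ * x)) =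
      2 * (α / γ) ^ (ν / 2) *
        ∫ t in Set.Ioi (0 : ℝ),
          Real.exp (-2 * Real.sqrt (α * γ) * Real.cosh t) * Real.cosh (ν * t) := by
  set s := Real.sqrt (α * γ) with hs_def
  have hs : 0 < s := Real.sqrt_pos.2 (mul_pos hα hγ)
  set b : ℝ := 2 * s with hb_def
  have hb : 0 < b := by positivity
  set c := Real.sqrt (α / γ) with hc_def
  have hc : 0 < c := Real.sqrt_pos.2 (div_pos hα hγ)
  have hc2 : c ^ 2 = α / γ := Real.sq_sqrt (div_pos hα hγ).le
  have h1 : γ * c = s := by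
    have h : (γ * c) ^ 2 = α * γ := by
      rw [mul_pow, hc2]; field_simp
    rw [hs_def, ← h, Real.sqrt_sq (by positivity)]
  have hγc2 : γ * c ^ 2 = α := by rw [hc2]; field_simp
  have h2 : α / c = s := by
    rw [← h1, div_eq_iff hc.ne']; linear_combination -hγc2
  -- the two model integrands
  set E : ℝ → ℝ → ℝ := fun μ t => Real.exp (μ * t - b * Real.cosh t) with hE_def
  -- RHS integrand equality
  have hRHSeq : (fun t : ℝ => Real.exp (-2 * s * Real.cosh t) * Real.cosh (ν * t)) =
      fun t => (E ν t + E (-ν) t) / 2 := by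
    funext t
    rw [eq_div_iff (by norm_num : (2:ℝ) ≠ 0), hE_def]
    simp only [hb_def]
    rw [mul_comm, ← pt_eq s ν t]
  have hRHSint : IntegrableOn
      (fun t : ℝ => Real.exp (-2 * s * Real.cosh t) * Real.cosh (ν * t)) (Set.Ioi 0) := by
    rw [hRHSeq]
    exact (((key_int hb ν).add (key_int hb (-ν))).div_const 2).integrableOn
  -- change of variables  x = c * exp t
  set f : ℝ → ℝ := fun t => c * Real.exp t with hf_def
  have hderiv : ∀ t ∈ (Set.univ : Set ℝ), HasDerivWithinAt f (c * Real.exp t) Set.univ t :=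
    fun t _ => ((Real.hasDerivAt_exp t).const_mul c).hasDerivWithinAt
  have hinj : Set.InjOn f Set.univ := by
    intro x _ y _ h
    exact Real.exp_injective (mul_left_cancel₀ hc.ne' h)
  have himg : f '' Set.univ = Set.Ioi 0 := by
    ext x
    simp only [Set.image_univ, Set.mem_range, Set.mem_Ioi, hf_def]
    constructor
    · rintro ⟨t, rfl⟩; positivity
    · intro hx
      refine ⟨Real.log (x / c), ?_⟩
      rw [Real.exp_log (by positivity)]
      field_simp
  set g : ℝ → ℝ := fun x => x ^ (ν - 1) * Real.exp (-α / x - γ * x) with hg_def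
  have hA : ∀ t : ℝ, -α / (c * Real.exp t) - γ * (c * Real.exp t)
      = -(s * Real.exp (-t)) - s * Real.exp t := by
    intro t
    rw [neg_div, div_mul_eq_div_div, h2, ← mul_assoc, h1, Real.exp_neg]
    ring
  have e1 : c ^ ν = c ^ (ν - 1) * c := by
    have h := Real.rpow_add hc (ν - 1) 1
    rw [Real.rpow_one] at h
    rw [← h]
    congr 1
    ring
  have esplit : ∀ t : ℝ, Real.exp (ν * t - b * Real.cosh t)
      = Real.exp t * Real.exp (t * (ν - 1)) *
        Real.exp (-(s * Real.exp (-t)) - s * Real.exp t) := by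
    intro t
    rw [← Real.exp_add, ← Real.exp_add]
    congr 1
    rw [Real.cosh_eq, hb_def]
    ring
  have heq : (fun t : ℝ => |c * Real.exp t| • g (c * Real.exp t))
      = fun t => c ^ ν * E ν t := by
    funext t
    have hpos : (0:ℝ) < c * Real.exp t := by positivity
    rw [hg_def, smul_eq_mul, abs_of_pos hpos]
    simp only
    rw [Real.mul_rpow hc.le (Real.exp_pos t).le,
      Real.rpow_def_of_pos (Real.exp_pos t), Real.log_exp, hA t, hE_def]
    simp only
    rw [esplit t, e1]
    ring
  -- transfer integrability and value
  have hiff := integrableOn_image_iff_integrableOn_abs_deriv_smul MeasurableSet.univ hderiv hinj g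
  rw [himg] at hiff
  have hLHSint : IntegrableOn g (Set.Ioi 0) := by
    rw [hiff, heq]
    exact (((key_int hb ν).const_mul _)).integrableOn
  refine ⟨hLHSint, hRHSint, ?_⟩
  have hval := integral_image_eq_integral_abs_deriv_smul MeasurableSet.univ hderiv hinj g
  rw [himg] at hval
  rw [hg_def] at hval ⊢
  rw [hval, heq, setIntegral_univ, integral_const_mul]
  -- split the real line
  have hsplit : (∫ t, E ν t) = (∫ t in Set.Iic (0:ℝ), E ν t) + ∫ t in Set.Ioi (0:ℝ), E ν t := by
    rw [← setIntegral_univ, ← Set.Iic_union_Ioi (a := (0:ℝ)),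
      setIntegral_union (Set.Iic_disjoint_Ioi le_rfl) measurableSet_Ioi
        (key_int hb ν).integrableOn (key_int hb ν).integrableOn]
  have hneg : (∫ t in Set.Iic (0:ℝ), E ν t) = ∫ t in Set.Ioi (0:ℝ), E (-ν) t := by
    have h5 : ∀ t : ℝ, E ν t = E (-ν) (-t) := by
      intro t
      rw [hE_def]
      simp only [Real.cosh_neg]
      congr 1
      ring
    calc (∫ t in Set.Iic (0:ℝ), E ν t) = ∫ t in Set.Iic (0:ℝ), E (-ν) (-t) := by
          simp only [h5]
      _ = ∫ t in Set.Ioi (-(0:ℝ)), E (-ν) t := integral_comp_neg_Iic 0 (E (-ν))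
      _ = ∫ t in Set.Ioi (0:ℝ), E (-ν) t := by rw [neg_zero]
  rw [hsplit, hneg, ← integral_add (key_int hb (-ν)).integrableOn (key_int hb ν).integrableOn]
  have hcomb : (∫ t in Set.Ioi (0:ℝ), (E (-ν) t + E ν t)) =
      2 * ∫ t in Set.Ioi (0:ℝ), Real.exp (-2 * s * Real.cosh t) * Real.cosh (ν * t) := by
    rw [← integral_const_mul]
    refine setIntegral_congr_fun measurableSet_Ioi (fun t _ => ?_)
    rw [congrFun hRHSeq t]
    ring
  rw [hcomb]
  have hcp : c ^ ν = (α / γ) ^ (ν / 2) := by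
    rw [hc_def, Real.sqrt_eq_rpow, ← Real.rpow_mul (div_pos hα hγ).le]
    congr 1
    ring
  rw [hcp]
  ring
end

section
/- For all real numbers M > 0 and b > 0, ∫₀^∞ s^{−1/2} e^{−Ms − b/s} ds = √(π/M) · e^{−2√(bM)}. -/
open MeasureTheory
open MeasureTheory Real Set

-- derivative of φ
lemma phi_deriv (a c x : ℝ) (hx : 0 < x) :
    HasDerivAt (fun t : ℝ => a * t - c / t) (a + c / x ^ 2) x := by
  have h1 : HasDerivAt (fun t : ℝ => a * t) a x := by
    simpa using (hasDerivAt_id x).const_mul a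
  have h2 : HasDerivAt (fun t : ℝ => c / t) (c * (-(x ^ 2)⁻¹)) x := by
    simpa [div_eq_mul_inv] using (hasDerivAt_inv hx.ne').const_mul c
  have := h1.sub h2
  exact this.congr_deriv (by ring)

lemma phi_image (a c : ℝ) (ha : 0 < a) (hc : 0 < c) :
    (fun t : ℝ => a * t - c / t) '' Ioi 0 = univ := by
  apply eq_univ_iff_forall.2
  intro u
  set r := Real.sqrt (u ^ 2 + 4 * a * c) with hr
  have hr2 : r ^ 2 = u ^ 2 + 4 * a * c := Real.sq_sqrt (by positivity)
  have hru : |u| < r := by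
    rw [← Real.sqrt_sq_eq_abs]
    apply Real.sqrt_lt_sqrt (by positivity); nlinarith
  have hrpos : -u < r := by cases abs_lt.1 hru; linarith
  set t := (u + r) / (2 * a) with htdef
  have ht : 0 < t := by apply div_pos; linarith; linarith
  refine ⟨t, ht, ?_⟩
  have hq : a * t ^ 2 - u * t - c = 0 := by
    rw [htdef]; field_simp; nlinarith
  field_simp
  nlinarith

lemma phi_inj (a c : ℝ) (ha : 0 < a) (hc : 0 < c) :
    InjOn (fun t : ℝ => a * t - c / t) (Ioi 0) := by
  apply StrictMonoOn.injOn
  intro x hx y hy hxy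
  simp only [mem_Ioi] at hx hy
  have h1 : a * x < a * y := by nlinarith
  have h2 : c / y < c / x := div_lt_div_of_pos_left hc hx hxy
  linarith

lemma psi_image (a c : ℝ) (ha : 0 < a) (hc : 0 < c) :
    (fun t : ℝ => c / (a * t)) '' Ioi 0 = Ioi 0 := by
  ext u
  constructor
  · rintro ⟨t, ht, rfl⟩
    simp only [mem_Ioi] at ht ⊢
    positivity
  · intro hu
    simp only [mem_Ioi] at hu
    refine ⟨c / (a * u), mem_Ioi.2 (by positivity), ?_⟩
    field_simp

lemma integrable_exp_phi (a c : ℝ) (ha : 0 < a) (hc : 0 < c) :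
    IntegrableOn (fun t : ℝ => Real.exp (-(a * t - c / t) ^ 2)) (Ioi 0) := by
  have hint : IntegrableOn (fun t : ℝ => Real.exp (2 * a * c) * Real.exp (-a ^ 2 * t ^ 2)) (Ioi 0) := by
    apply Integrable.const_mul
    exact (integrableOn_Ioi_exp_neg_mul_sq_iff.2 (by positivity))
  apply hint.mono'
  · apply ContinuousOn.aestronglyMeasurable _ measurableSet_Ioi
    apply Continuous.comp_continuousOn Real.continuous_exp
    apply ContinuousOn.neg
    apply ContinuousOn.pow
    exact (continuous_const.mul continuous_id).continuousOn.sub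
      (continuousOn_const.div continuousOn_id (fun x hx => ne_of_gt hx))
  · filter_upwards [ae_restrict_mem measurableSet_Ioi] with t ht
    simp only [mem_Ioi] at ht
    rw [Real.norm_eq_abs, abs_of_pos (Real.exp_pos _), ← Real.exp_add]
    apply Real.exp_le_exp.2
    have h : (c / t) ^ 2 ≥ 0 := sq_nonneg _
    have h2 : (a * t - c / t) ^ 2 = a ^ 2 * t ^ 2 - 2 * a * c + (c / t) ^ 2 := by
      field_simp; ring
    nlinarith

lemma integrable_exp_phi' (a c : ℝ) (ha : 0 < a) (hc : 0 < c) :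
    IntegrableOn (fun t : ℝ => c / t ^ 2 * Real.exp (-(a * t - c / t) ^ 2)) (Ioi 0) := by
  have hint : IntegrableOn (fun t : ℝ => (Real.exp (2 * a * c) / c) * Real.exp (-a ^ 2 * t ^ 2)) (Ioi 0) := by
    apply Integrable.const_mul
    exact (integrableOn_Ioi_exp_neg_mul_sq_iff.2 (by positivity))
  apply hint.mono'
  · apply ContinuousOn.aestronglyMeasurable _ measurableSet_Ioi
    apply ContinuousOn.mul
    · exact continuousOn_const.div (continuousOn_pow 2)
        (fun x hx => by simp only [mem_Ioi] at hx; positivity)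
    · apply Continuous.comp_continuousOn Real.continuous_exp
      apply ContinuousOn.neg
      apply ContinuousOn.pow
      exact (continuous_const.mul continuous_id).continuousOn.sub
        (continuousOn_const.div continuousOn_id (fun x hx => ne_of_gt hx))
  · filter_upwards [ae_restrict_mem measurableSet_Ioi] with t ht
    simp only [mem_Ioi] at ht
    have hct : 0 < c / t ^ 2 := by positivity
    rw [Real.norm_eq_abs, abs_of_pos (by positivity)]
    have h2 : (a * t - c / t) ^ 2 = a ^ 2 * t ^ 2 - 2 * a * c + c ^ 2 / t ^ 2 := by
      field_simp; ring
    rw [h2]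
    have key : c / t ^ 2 * Real.exp (-(c ^ 2 / t ^ 2)) ≤ 1 / c := by
      have hx : 0 < c ^ 2 / t ^ 2 := by positivity
      have := Real.add_one_le_exp (c ^ 2 / t ^ 2)
      have hle : c ^ 2 / t ^ 2 * Real.exp (-(c ^ 2 / t ^ 2)) ≤ 1 := by
        rw [Real.exp_neg]
        rw [mul_inv_le_iff₀ (Real.exp_pos _), one_mul]
        linarith
      calc c / t ^ 2 * Real.exp (-(c ^ 2 / t ^ 2))
          = (1 / c) * (c ^ 2 / t ^ 2 * Real.exp (-(c ^ 2 / t ^ 2))) := by field_simp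
        _ ≤ (1 / c) * 1 := by
            apply mul_le_mul_of_nonneg_left hle (by positivity)
        _ = 1 / c := mul_one _
    calc c / t ^ 2 * Real.exp (-(a ^ 2 * t ^ 2 - 2 * a * c + c ^ 2 / t ^ 2))
        = Real.exp (2 * a * c) * (c / t ^ 2 * Real.exp (-(c ^ 2 / t ^ 2))) * Real.exp (-a ^ 2 * t ^ 2) := by
          have e1 : Real.exp (2 * a * c) * Real.exp (-(c ^ 2 / t ^ 2)) * Real.exp (-a ^ 2 * t ^ 2)
              = Real.exp (-(a ^ 2 * t ^ 2 - 2 * a * c + c ^ 2 / t ^ 2)) := by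
            rw [← Real.exp_add, ← Real.exp_add]; ring_nf
          calc c / t ^ 2 * Real.exp (-(a ^ 2 * t ^ 2 - 2 * a * c + c ^ 2 / t ^ 2))
              = c / t ^ 2 * (Real.exp (2 * a * c) * Real.exp (-(c ^ 2 / t ^ 2)) * Real.exp (-a ^ 2 * t ^ 2)) := by
                rw [e1]
            _ = Real.exp (2 * a * c) * (c / t ^ 2 * Real.exp (-(c ^ 2 / t ^ 2))) * Real.exp (-a ^ 2 * t ^ 2) := by
                ring
      _ ≤ Real.exp (2 * a * c) * (1 / c) * Real.exp (-a ^ 2 * t ^ 2) := by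
          apply mul_le_mul_of_nonneg_right _ (Real.exp_pos _).le
          exact mul_le_mul_of_nonneg_left key (Real.exp_pos _).le
      _ = Real.exp (2 * a * c) / c * Real.exp (-a ^ 2 * t ^ 2) := by ring

lemma key_integral (a c : ℝ) (ha : 0 < a) (hc : 0 < c) :
    ∫ t in Ioi (0:ℝ), Real.exp (-(a * t - c / t) ^ 2) = Real.sqrt Real.pi / (2 * a) := by
  set J := ∫ t in Ioi (0:ℝ), Real.exp (-(a * t - c / t) ^ 2) with hJ
  -- change of variables u = a t - c / t over Ioi 0 gives the full Gaussian
  have gauss : ∫ u : ℝ, Real.exp (-u ^ 2) = Real.sqrt Real.pi := by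
    simpa using integral_gaussian 1
  have cov : (Real.sqrt Real.pi)
      = ∫ t in Ioi (0:ℝ), (a + c / t ^ 2) * Real.exp (-(a * t - c / t) ^ 2) := by
    have h := integral_image_eq_integral_abs_deriv_smul (s := Ioi (0:ℝ))
      (f := fun t => a * t - c / t) (f' := fun t => a + c / t ^ 2)
      measurableSet_Ioi
      (fun x hx => (phi_deriv a c x hx).hasDerivWithinAt)
      (phi_inj a c ha hc) (fun u => Real.exp (-u ^ 2))
    rw [phi_image a c ha hc] at h
    rw [← gauss, ← setIntegral_univ, h]
    apply setIntegral_congr_fun measurableSet_Ioi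
    intro t ht
    simp only [mem_Ioi] at ht
    simp only [smul_eq_mul]
    rw [abs_of_pos (by positivity)]
  -- reflection substitution t ↦ c/(a t)
  have hrefl : J = ∫ t in Ioi (0:ℝ), (c / (a * t ^ 2)) * Real.exp (-(a * t - c / t) ^ 2) := by
    have h := integral_image_eq_integral_abs_deriv_smul (s := Ioi (0:ℝ))
      (f := fun t => c / (a * t)) (f' := fun t => -(c / (a * t ^ 2)))
      measurableSet_Ioi
      (fun x hx => ?_)
      (fun x hx y hy hxy => ?_) (fun u => Real.exp (-(a * u - c / u) ^ 2))
    · rw [psi_image a c ha hc] at h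
      rw [hJ, h]
      apply setIntegral_congr_fun measurableSet_Ioi
      intro t ht
      simp only [mem_Ioi] at ht
      simp only [smul_eq_mul, abs_neg]
      rw [abs_of_pos (by positivity)]
      congr 2
      have h1 : a * (c / (a * t)) - c / (c / (a * t)) = -(a * t - c / t) := by
        field_simp; ring
      rw [h1]; ring
    · -- derivative of c / (a * x)
      simp only [mem_Ioi] at hx
      apply HasDerivAt.hasDerivWithinAt
      have hd : HasDerivAt (fun t : ℝ => (c / a) * t⁻¹) ((c / a) * (-(x ^ 2)⁻¹)) x :=
        (hasDerivAt_inv hx.ne').const_mul (c / a)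
      have heq : (fun t : ℝ => (c / a) * t⁻¹) = fun t : ℝ => c / (a * t) := by
        funext t; rw [← div_div, div_eq_mul_inv (c / a) t]
      rw [heq] at hd
      exact hd.congr_deriv (by ring)
    · -- injectivity
      simp only [mem_Ioi] at hx hy
      simp only at hxy
      rw [div_eq_div_iff (by positivity) (by positivity)] at hxy
      have h1 := mul_left_cancel₀ hc.ne' hxy
      exact (mul_left_cancel₀ ha.ne' h1).symm
  have h2 : ∫ t in Ioi (0:ℝ), (c / t ^ 2) * Real.exp (-(a * t - c / t) ^ 2) = a * J := by
    rw [hrefl, ← integral_const_mul]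
    apply setIntegral_congr_fun measurableSet_Ioi
    intro t ht
    simp only [mem_Ioi] at ht
    field_simp
  have hsplit : (Real.sqrt Real.pi) = a * J + a * J := by
    rw [cov]
    have : ∀ t ∈ Ioi (0:ℝ), (a + c / t ^ 2) * Real.exp (-(a * t - c / t) ^ 2)
        = a * Real.exp (-(a * t - c / t) ^ 2) + (c / t ^ 2) * Real.exp (-(a * t - c / t) ^ 2) := by
      intro t ht; ring
    rw [setIntegral_congr_fun measurableSet_Ioi this,
      integral_add ((integrable_exp_phi a c ha hc).const_mul a) (integrable_exp_phi' a c ha hc),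
      integral_const_mul, h2]
  have : J = Real.sqrt Real.pi / (2 * a) := by
    field_simp
    linarith
  exact this

/-- For `M, b > 0`, `∫₀^∞ s^{−1/2} e^{−Ms − b/s} ds = √(π/M) · e^{−2√(bM)}`. -/
theorem stmt6 (M b : ℝ) (hM : 0 < M) (hb : 0 < b) :
    (∫ s in Set.Ioi (0 : ℝ), s ^ (-(1 : ℝ) / 2) * Real.exp (-M * s - b / s)) =
      Real.sqrt (Real.pi / M) * Real.exp (-2 * Real.sqrt (b * M)) := by
  have ha : 0 < Real.sqrt M := Real.sqrt_pos.2 hM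
  have hc : 0 < Real.sqrt b := Real.sqrt_pos.2 hb
  set a := Real.sqrt M with hadef
  set c := Real.sqrt b with hcdef
  have hM2 : a ^ 2 = M := Real.sq_sqrt hM.le
  have hb2 : c ^ 2 = b := Real.sq_sqrt hb.le
  -- Step 1 : substitution s = t ^ 2
  have h1 : (∫ s in Set.Ioi (0 : ℝ), s ^ (-(1 : ℝ) / 2) * Real.exp (-M * s - b / s))
      = ∫ t in Set.Ioi (0:ℝ), 2 * Real.exp (-M * t ^ 2 - b / t ^ 2) := by
    rw [← integral_comp_rpow_Ioi (fun s => s ^ (-(1:ℝ)/2) * Real.exp (-M * s - b / s))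
      (p := 2) two_ne_zero]
    apply setIntegral_congr_fun measurableSet_Ioi
    intro t ht
    simp only [mem_Ioi] at ht
    simp only [smul_eq_mul]
    have e1 : (t:ℝ) ^ (2:ℝ) = t ^ 2 := by
      rw [show ((2:ℝ)) = ((2:ℕ):ℝ) by norm_num, Real.rpow_natCast]
    have e2 : ((t:ℝ) ^ 2) ^ (-(1:ℝ)/2) = t⁻¹ := by
      rw [← Real.rpow_natCast t 2, ← Real.rpow_mul ht.le]
      norm_num
      rw [Real.rpow_neg_one]
    rw [e1, e2]
    have : |(2:ℝ)| * t ^ ((2:ℝ) - 1) = 2 * t := by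
      norm_num
    rw [this]
    field_simp
  -- Step 2 : complete the square in the exponent
  have h2 : EqOn (fun t : ℝ => 2 * Real.exp (-M * t ^ 2 - b / t ^ 2))
      (fun t : ℝ => (2 * Real.exp (-(2 * a * c))) * Real.exp (-(a * t - c / t) ^ 2))
      (Set.Ioi 0) := by
    intro t ht
    simp only [mem_Ioi] at ht
    simp only
    rw [mul_assoc, ← Real.exp_add]
    congr 1
    rw [← hM2, ← hb2]
    field_simp
    ring
  rw [h1, setIntegral_congr_fun measurableSet_Ioi h2]
  rw [integral_const_mul, key_integral a c ha hc]
  rw [Real.sqrt_div Real.pi_pos.le, Real.sqrt_mul hb.le, ← hadef, ← hcdef,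
    show (-2 * (c * a)) = -(2 * a * c) by ring]
  field_simp
end

section
/- Let c₀, …, c_J be real numbers with Σⱼ cⱼ = 0, and let M₀, …, M_J > 0. Then the function s ↦ Σⱼ cⱼ e^{−sMⱼ}(1/(2s) − Mⱼ) is Lebesgue integrable on (0,∞) and ∫₀^∞ Σⱼ cⱼ e^{−sMⱼ}(1/(2s) − Mⱼ) ds = −(1/2) Σⱼ cⱼ log Mⱼ. -/
open MeasureTheory Set Filter

/-- 1-Lipschitz bound for `exp (-·)` on nonnegative reals. -/
lemma exp_neg_lip {x y : ℝ} (hx : 0 ≤ x) (hy : 0 ≤ y) :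
    |Real.exp (-x) - Real.exp (-y)| ≤ |x - y| := by
  wlog h : x ≤ y generalizing x y
  · rw [abs_sub_comm, abs_sub_comm x y]; exact this hy hx (le_of_not_ge h)
  have h1 : Real.exp (-y) ≤ Real.exp (-x) := Real.exp_le_exp.2 (by linarith)
  rw [abs_of_nonneg (by linarith), abs_of_nonpos (by linarith)]
  have h2 : Real.exp (-x) ≤ 1 := Real.exp_le_one_iff.2 (by linarith)
  have h3 : 1 - (y - x) ≤ Real.exp (-(y - x)) := by
    have := Real.add_one_le_exp (-(y - x)); linarith
  have h4 : Real.exp (-y) = Real.exp (-x) * Real.exp (-(y - x)) := by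
    rw [← Real.exp_add]; ring_nf
  nlinarith [Real.exp_pos (-x), Real.exp_pos (-(y - x))]

lemma frullani_integrable {m : ℝ} (hm : 0 < m) :
    IntegrableOn (fun s => (Real.exp (-(m * s)) - Real.exp (-s)) / s) (Ioi 0) := by
  have hIoi : Ioc (0:ℝ) 1 ∪ Ioi 1 = Ioi 0 := Ioc_union_Ioi_eq_Ioi zero_le_one
  rw [← hIoi]
  apply IntegrableOn.union
  · -- on (0,1], bounded by |m - 1|
    have hmeas : AEStronglyMeasurable (fun s => (Real.exp (-(m * s)) - Real.exp (-s)) / s)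
        (volume.restrict (Ioc (0:ℝ) 1)) := by
      apply ContinuousOn.aestronglyMeasurable _ measurableSet_Ioc
      apply ContinuousOn.div (by fun_prop) continuousOn_id
      intro x hx; exact ne_of_gt hx.1
    refine (integrable_const |m - 1|).mono' hmeas ?_
    filter_upwards [ae_restrict_mem measurableSet_Ioc] with s hs
    have hs0 : 0 < s := hs.1
    rw [Real.norm_eq_abs, abs_div, abs_of_pos hs0, div_le_iff₀ hs0]
    calc |Real.exp (-(m * s)) - Real.exp (-s)| ≤ |m * s - s| :=
          exp_neg_lip (by positivity) hs0.le
      _ = |m - 1| * s := by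
          rw [show m * s - s = (m - 1) * s by ring, abs_mul, abs_of_pos hs0]
  · -- on (1,∞), bounded by exp(-(m s)) + exp(-s)
    have hint : IntegrableOn (fun s => Real.exp (-m * s) + Real.exp (-1 * s)) (Ioi 1) :=
      (exp_neg_integrableOn_Ioi 1 hm).add (exp_neg_integrableOn_Ioi 1 one_pos)
    refine hint.mono' ?_ ?_
    · apply ContinuousOn.aestronglyMeasurable _ measurableSet_Ioi
      apply ContinuousOn.div (by fun_prop) continuousOn_id
      intro x hx; exact ne_of_gt (lt_trans one_pos hx)
    · filter_upwards [ae_restrict_mem measurableSet_Ioi] with s hs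
      have hs1 : (1:ℝ) ≤ s := le_of_lt hs
      have hs0 : 0 < s := lt_of_lt_of_le one_pos hs1
      rw [Real.norm_eq_abs, abs_div, abs_of_pos hs0]
      have h1 : |Real.exp (-(m * s)) - Real.exp (-s)| ≤ Real.exp (-(m*s)) + Real.exp (-s) := by
        have := abs_sub (Real.exp (-(m * s))) (Real.exp (-s))
        rw [abs_of_pos (Real.exp_pos _), abs_of_pos (Real.exp_pos _)] at this
        exact this
      calc |Real.exp (-(m * s)) - Real.exp (-s)| / s
            ≤ (Real.exp (-(m*s)) + Real.exp (-s)) / s := by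
              gcongr
        _ ≤ Real.exp (-m * s) + Real.exp (-1 * s) := by
              rw [div_le_iff₀ hs0, neg_mul, neg_mul, one_mul]
              nlinarith [Real.exp_pos (-(m*s)), Real.exp_pos (-s)]

lemma exp_integrableOn {m : ℝ} (hm : 0 < m) :
    IntegrableOn (fun s => Real.exp (-(m * s))) (Ioi 0) := by
  simpa [neg_mul] using exp_neg_integrableOn_Ioi 0 hm

lemma exp_integral {m : ℝ} (hm : 0 < m) :
    ∫ s in Ioi (0:ℝ), Real.exp (-(m * s)) = m⁻¹ := by
  have := integral_comp_mul_left_Ioi (fun x => Real.exp (-x)) 0 hm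
  simp only [mul_zero, integral_exp_neg_Ioi, neg_zero, Real.exp_zero, smul_eq_mul,
    mul_one] at this
  simpa using this

lemma frullani_eq {m : ℝ} (hm : 0 < m) :
    ∫ s in Ioi (0:ℝ), (Real.exp (-(m * s)) - Real.exp (-s)) / s = -Real.log m := by
  set F : ℝ → ℝ := fun x => ∫ s in Ioi (0:ℝ), (Real.exp (-(x * s)) - Real.exp (-s)) / s with hF
  have hderiv : ∀ x : ℝ, 0 < x → HasDerivAt F (-x⁻¹) x := by
    intro x hx
    have hball : ∀ y ∈ Metric.ball x (x/2), x/2 ≤ y := by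
      intro y hy
      rw [Metric.mem_ball, Real.dist_eq, abs_lt] at hy
      linarith [hy.1]
    have key := hasDerivAt_integral_of_dominated_loc_of_deriv_le
      (μ := volume.restrict (Ioi (0:ℝ)))
      (F := fun x s => (Real.exp (-(x * s)) - Real.exp (-s)) / s)
      (F' := fun x s => -Real.exp (-(x * s)))
      (x₀ := x) (bound := fun s => Real.exp (-(x/2) * s))
      (Metric.ball_mem_nhds x (half_pos hx))
      (by
        filter_upwards with y
        apply ContinuousOn.aestronglyMeasurable _ measurableSet_Ioi
        apply ContinuousOn.div (by fun_prop) continuousOn_id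
        intro t ht; exact ne_of_gt ht)
      (frullani_integrable hx)
      (by apply Continuous.aestronglyMeasurable; fun_prop)
      (by
        filter_upwards [ae_restrict_mem measurableSet_Ioi] with s hs y hy
        have h1 : x/2 ≤ y := hball y hy
        rw [norm_neg, Real.norm_eq_abs, abs_of_pos (Real.exp_pos _), Real.exp_le_exp]
        have : (0:ℝ) < s := hs
        nlinarith)
      (by simpa [neg_mul] using (exp_integrableOn (half_pos hx)).integrable)
      (by
        filter_upwards [ae_restrict_mem measurableSet_Ioi] with s hs y _
        have hs0 : (0:ℝ) < s := hs
        have h1 : HasDerivAt (fun z : ℝ => -(z * s)) (-s) y := by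
          simpa [Pi.neg_def] using ((hasDerivAt_id y).mul_const s).neg
        have h2 : HasDerivAt (fun z : ℝ => Real.exp (-(z * s))) (Real.exp (-(y*s)) * (-s)) y :=
          h1.exp
        have h3 := (h2.sub_const (Real.exp (-s))).div_const s
        refine h3.congr_deriv ?_
        rw [mul_neg, neg_div, mul_div_assoc, div_self hs0.ne', mul_one])
    have h2 := key.2
    rwa [show (∫ s in Ioi (0:ℝ), -Real.exp (-(x * s))) = -x⁻¹ by
      rw [integral_neg, exp_integral hx]] at h2
  have hF1 : F 1 = 0 := by
    simp [hF]
  have hsub : F m - F 1 = ∫ t in (1:ℝ)..m, -t⁻¹ := by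
    refine (intervalIntegral.integral_eq_sub_of_hasDerivAt ?_ ?_).symm
    · intro t ht
      have ht0 : 0 < t := by
        rcases le_total 1 m with h | h
        · have := (Set.uIcc_of_le h ▸ ht).1; linarith
        · have := (Set.uIcc_of_ge h ▸ ht).1; linarith
      exact hderiv t ht0
    · apply IntervalIntegrable.neg
      rw [intervalIntegrable_inv_iff]
      right
      intro h0
      rcases le_total 1 m with hle | hle
      · rw [Set.uIcc_of_le hle] at h0; linarith [h0.1]
      · rw [Set.uIcc_of_ge hle] at h0; linarith [h0.1]
  have hval : ∫ t in (1:ℝ)..m, -t⁻¹ = -Real.log m := by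
    rw [intervalIntegral.integral_neg, integral_inv]
    · rw [div_one]
    · intro h
      have h0 : (0:ℝ) ∈ uIcc 1 m := h
      have := h0.1
      have := h0.2
      rcases le_total 1 m with hle | hle
      · rw [Set.uIcc_of_le hle] at h0; linarith [h0.1]
      · rw [Set.uIcc_of_ge hle] at h0; linarith [h0.1]
  have := hsub
  rw [hF1, sub_zero, hval] at this
  exact this

noncomputable def psiF (m : ℝ) (s : ℝ) : ℝ :=
  (Real.exp (-(m * s)) - Real.exp (-s)) / s * (1/2) - m * Real.exp (-(m * s))

lemma psi_integrable {m : ℝ} (hm : 0 < m) : IntegrableOn (psiF m) (Ioi 0) :=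
  ((frullani_integrable hm).mul_const _).sub ((exp_integrableOn hm).const_mul m)

lemma psi_integral {m : ℝ} (hm : 0 < m) :
    ∫ s in Ioi (0:ℝ), psiF m s = -(1/2) * Real.log m - 1 := by
  unfold psiF
  rw [integral_sub (((frullani_integrable hm)).mul_const _) ((exp_integrableOn hm).const_mul m),
    integral_mul_const, integral_const_mul, frullani_eq hm, exp_integral hm]
  field_simp

/-- Frullani-type identity: if `Σⱼ cⱼ = 0` and `Mⱼ > 0`, then
`s ↦ Σⱼ cⱼ e^{−sMⱼ}(1/(2s) − Mⱼ)` is integrable on `(0,∞)` with integral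
`−(1/2) Σⱼ cⱼ log Mⱼ`. -/
theorem stmt7 (J : ℕ) (c M : Fin (J + 1) → ℝ) (hc : ∑ j, c j = 0) (hM : ∀ j, 0 < M j) :
    IntegrableOn
      (fun s : ℝ => ∑ j, c j * Real.exp (-s * M j) * (1 / (2 * s) - M j)) (Set.Ioi 0) ∧
    (∫ s in Set.Ioi (0 : ℝ), ∑ j, c j * Real.exp (-s * M j) * (1 / (2 * s) - M j)) =
      -(1 / 2) * ∑ j, c j * Real.log (M j) := by
  have hpt : ∀ s ∈ Ioi (0:ℝ),
      (∑ j, c j * Real.exp (-s * M j) * (1 / (2 * s) - M j)) = ∑ j, c j * psiF (M j) s := by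
    intro s hs
    have hs0 : s ≠ 0 := ne_of_gt hs
    have step : ∀ j, c j * Real.exp (-s * M j) * (1 / (2 * s) - M j)
        = c j * psiF (M j) s + c j * (Real.exp (-s) / (2 * s)) := by
      intro j
      have hexp : Real.exp (-(M j * s)) = Real.exp (-s * M j) := by ring_nf
      unfold psiF
      rw [hexp]
      field_simp
      ring
    calc (∑ j, c j * Real.exp (-s * M j) * (1 / (2 * s) - M j))
        = ∑ j, (c j * psiF (M j) s + c j * (Real.exp (-s) / (2 * s))) :=
          Finset.sum_congr rfl fun j _ => step j
      _ = (∑ j, c j * psiF (M j) s) + (∑ j, c j) * (Real.exp (-s) / (2 * s)) := by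
          rw [Finset.sum_add_distrib, Finset.sum_mul]
      _ = ∑ j, c j * psiF (M j) s := by rw [hc, zero_mul, add_zero]
  have hint : IntegrableOn (fun s => ∑ j, c j * psiF (M j) s) (Ioi 0) :=
    integrable_finset_sum _ fun j _ => (psi_integrable (hM j)).const_mul (c j)
  constructor
  · exact hint.congr_fun (fun s hs => (hpt s hs).symm) measurableSet_Ioi
  · rw [setIntegral_congr_fun measurableSet_Ioi hpt,
      integral_finset_sum _ fun j _ => (psi_integrable (hM j)).const_mul (c j)]
    have : ∀ j, (∫ s in Ioi (0:ℝ), c j * psiF (M j) s)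
        = c j * (-(1/2) * Real.log (M j) - 1) := by
      intro j
      rw [integral_const_mul, psi_integral (hM j)]
    simp_rw [this]
    rw [show ∑ j, c j * (-(1/2) * Real.log (M j) - 1)
        = -(1/2) * (∑ j, c j * Real.log (M j)) - ∑ j, c j by
      rw [Finset.mul_sum, ← Finset.sum_sub_distrib]
      exact Finset.sum_congr rfl fun j _ => by ring]
    rw [hc, sub_zero]
end

section
/- Let c₀, …, c_J be real numbers and M₀, …, M_J > 0 with Σⱼ cⱼ = 0 and Σⱼ cⱼ Mⱼ = 0. Then the function s ↦ s^{−2} Σⱼ cⱼ e^{−sMⱼ} is Lebesgue integrable on (0,∞) and ∫₀^∞ s^{−2} Σⱼ cⱼ e^{−sMⱼ} ds = Σⱼ cⱼ Mⱼ log Mⱼ. -/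
open MeasureTheory Real Set Filter


lemma int_exp_Ioi {u : ℝ} (hu : 0 < u) :
    ∫ s in Set.Ioi (0:ℝ), Real.exp (-(s * u)) = 1 / u := by
  have h1 : ∀ x ∈ Set.Ici (0:ℝ), HasDerivAt (fun s => -Real.exp (-(s*u)) / u)
      (Real.exp (-(x*u))) x := by
    intro x _
    have hd : HasDerivAt (fun s : ℝ => -(s*u)) (-u) x := by
      simpa using ((hasDerivAt_id x).mul_const u).fun_neg
    have := (hd.exp).neg.div_const u
    refine this.congr_deriv ?_
    field_simp
  have h2 : IntegrableOn (fun s => Real.exp (-(s*u))) (Set.Ioi (0:ℝ)) := by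
    have := exp_neg_integrableOn_Ioi (b := u) 0 hu
    refine this.congr_fun (fun x _ => by ring_nf) measurableSet_Ioi
  have h3 : Tendsto (fun s => -Real.exp (-(s*u)) / u) atTop (nhds 0) := by
    have : Tendsto (fun s : ℝ => -(s*u)) atTop atBot := by
      simpa [neg_mul, mul_comm] using (tendsto_id.const_mul_atTop_of_neg
        (neg_neg_iff_pos.2 hu) : Tendsto (fun s : ℝ => -u * s) atTop atBot)
    have := (Real.tendsto_exp_atBot.comp this).neg.div_const u
    simpa using this
  have := integral_Ioi_of_hasDerivAt_of_tendsto' h1 h2 h3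
  simpa [div_eq_mul_inv] using this


lemma frullani_piece {M : ℝ} (hM : 0 < M) :
    IntegrableOn (fun s : ℝ => (Real.exp (-(s*M)) - Real.exp (-s)) / s^2
      + (M - 1) * Real.exp (-s) / s) (Set.Ioi 0) ∧
    (∫ s in Set.Ioi (0:ℝ), ((Real.exp (-(s*M)) - Real.exp (-s)) / s^2
      + (M - 1) * Real.exp (-s) / s)) = M * Real.log M - M + 1 := by
  have hmin : 0 < min 1 M := lt_min one_pos hM
  set A : Set ℝ := Set.uIoc (1:ℝ) M with hA
  -- product integrability
  have hprod : Integrable (fun p : ℝ × ℝ => (M - p.2) * Real.exp (-(p.1 * p.2)))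
      ((volume.restrict (Set.Ioi 0)).prod (volume.restrict A)) := by
    have hmeas : AEStronglyMeasurable (fun p : ℝ × ℝ => (M - p.2) * Real.exp (-(p.1 * p.2)))
        ((volume.restrict (Set.Ioi 0)).prod (volume.restrict A)) := by
      apply Continuous.aestronglyMeasurable
      continuity
    refine Integrable.mono'
      (g := fun p : ℝ × ℝ => ((max 1 M - min 1 M + 1) * Real.exp (-(min 1 M) * p.1)) * 1)
      ?_ hmeas ?_
    · exact Integrable.mul_prod ((exp_neg_integrableOn_Ioi 0 hmin).const_mul _)
        (integrableOn_const (by rw [hA, Set.uIoc]; exact measure_Ioc_lt_top.ne))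
    · have hae : ∀ᵐ p ∂((volume.restrict (Set.Ioi (0:ℝ))).prod (volume.restrict A)),
          p ∈ (Set.Ioi (0:ℝ)) ×ˢ A := by
        rw [Measure.prod_restrict]
        exact ae_restrict_mem (measurableSet_Ioi.prod measurableSet_uIoc)
      filter_upwards [hae] with p hp
      obtain ⟨hp1, hp2⟩ := hp
      have hs : (0:ℝ) < p.1 := hp1
      have hu1 : min 1 M < p.2 := hp2.1
      have hu2 : p.2 ≤ max 1 M := hp2.2
      have hMle : M ≤ max 1 M := le_max_right 1 M
      have hMge : min 1 M ≤ M := min_le_right 1 M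
      rw [mul_one, norm_mul, Real.norm_eq_abs, Real.norm_eq_abs, Real.abs_exp]
      have h1 : |M - p.2| ≤ max 1 M - min 1 M + 1 := by
        rw [abs_le]; constructor <;> linarith
      have h2 : Real.exp (-(p.1 * p.2)) ≤ Real.exp (-(min 1 M) * p.1) := by
        apply Real.exp_le_exp.2
        rw [neg_mul, neg_le_neg_iff]
        calc min 1 M * p.1 ≤ p.2 * p.1 := by
              apply mul_le_mul_of_nonneg_right hu1.le hs.le
          _ = p.1 * p.2 := mul_comm _ _
      have h3 : (0:ℝ) ≤ max 1 M - min 1 M + 1 := by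
        have := min_le_max (a := (1:ℝ)) (b := M); linarith
      exact mul_le_mul h1 h2 (Real.exp_pos _).le h3
  have hmarg : IntegrableOn (fun s : ℝ => ∫ u in A, (M - u) * Real.exp (-(s * u))) (Set.Ioi 0) :=
    hprod.integral_prod_left
  set σ : ℝ := if (1:ℝ) ≤ M then 1 else -1 with hσ
  have hσσ : σ * σ = 1 := by rw [hσ]; split_ifs <;> norm_num
  have hIS : ∀ f : ℝ → ℝ, σ * (∫ u in (1:ℝ)..M, f u) = ∫ u in A, f u := by
    intro f
    rw [intervalIntegral.intervalIntegral_eq_integral_uIoc, ← hA, smul_eq_mul, ← hσ,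
      ← mul_assoc, hσσ, one_mul]
  -- pointwise identity
  have hpt : ∀ s ∈ Set.Ioi (0:ℝ),
      (Real.exp (-(s*M)) - Real.exp (-s)) / s^2 + (M - 1) * Real.exp (-s) / s
        = σ * ∫ u in A, (M - u) * Real.exp (-(s * u)) := by
    intro s hs
    have hs0 : s ≠ 0 := ne_of_gt hs
    have key : (∫ u in (1:ℝ)..M, (M - u) * Real.exp (-(s*u)))
        = (Real.exp (-(s*M)) - Real.exp (-s)) / s^2 + (M-1) * Real.exp (-s)/s := by
      have hG : ∀ u ∈ Set.uIcc (1:ℝ) M, HasDerivAt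
          (fun v => -(M - v) * Real.exp (-(s*v)) / s + Real.exp (-(s*v)) / s^2)
          ((M - u) * Real.exp (-(s*u))) u := by
        intro u _
        have h1 : HasDerivAt (fun v : ℝ => -(s*v)) (-s) u := by
          simpa using ((hasDerivAt_id u).const_mul s).fun_neg
        have he := h1.exp
        have hd := (((((hasDerivAt_id u).const_sub M).neg).mul he).div_const s).add
          (he.div_const (s^2))
        refine hd.congr_deriv ?_
        simp only [Pi.neg_apply, id]
        field_simp
        ring
      have hci : IntervalIntegrable (fun u => (M - u) * Real.exp (-(s*u))) volume 1 M :=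
        (Continuous.intervalIntegrable (by continuity) 1 M)
      rw [intervalIntegral.integral_eq_sub_of_hasDerivAt hG hci]
      field_simp
      ring
    rw [← hIS (fun u => (M - u) * Real.exp (-(s * u))), ← mul_assoc, hσσ, one_mul, key]
  constructor
  · exact IntegrableOn.congr_fun (hmarg.const_mul σ) (fun s hs => (hpt s hs).symm)
      measurableSet_Ioi
  · rw [setIntegral_congr_fun measurableSet_Ioi hpt, integral_const_mul,
      MeasureTheory.integral_integral_swap hprod]
    have hinner : ∀ u ∈ A, (∫ s in Set.Ioi (0:ℝ), (M - u) * Real.exp (-(s * u)))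
        = (M - u) * (1/u) := by
      intro u hu
      have hu0 : 0 < u := lt_trans hmin hu.1
      rw [MeasureTheory.integral_const_mul, int_exp_Ioi hu0]
    rw [setIntegral_congr_fun measurableSet_uIoc hinner]
    rw [← hA, ← hIS (fun u => (M - u) * (1/u)), ← mul_assoc, hσσ, one_mul]
    have hF : ∀ u ∈ Set.uIcc (1:ℝ) M, HasDerivAt (fun v => M * Real.log v - v)
        ((M - u) * (1/u)) u := by
      intro u hu
      have hu0 : u ≠ 0 := by
        have : 0 < u := lt_of_lt_of_le hmin (by
          rcases Set.mem_uIcc.1 hu with h | h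
          · exact le_trans (min_le_left 1 M) h.1
          · exact le_trans (min_le_right 1 M) h.1)
        exact ne_of_gt this
      have := ((Real.hasDerivAt_log hu0).const_mul M).sub (hasDerivAt_id u)
      refine this.congr_deriv ?_
      field_simp
    have hci : IntervalIntegrable (fun u => (M - u) * (1/u)) volume 1 M := by
      apply ContinuousOn.intervalIntegrable
      apply ContinuousOn.mul (by fun_prop)
      apply ContinuousOn.div continuousOn_const continuousOn_id
      intro u hu
      have : 0 < u := lt_of_lt_of_le hmin (by
        rcases Set.mem_uIcc.1 hu with h | h
        · exact le_trans (min_le_left 1 M) h.1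
        · exact le_trans (min_le_right 1 M) h.1)
      exact ne_of_gt this
    rw [intervalIntegral.integral_eq_sub_of_hasDerivAt hF hci]
    simp [Real.log_one]
/-- Frullani-type identity: if `Σⱼ cⱼ = 0`, `Σⱼ cⱼ Mⱼ = 0` and `Mⱼ > 0`, then
`s ↦ s^{−2} Σⱼ cⱼ e^{−sMⱼ}` is integrable on `(0,∞)` with integral `Σⱼ cⱼ Mⱼ log Mⱼ`. -/
theorem stmt8 (J : ℕ) (c M : Fin (J + 1) → ℝ) (hc : ∑ j, c j = 0)
    (hcM : ∑ j, c j * M j = 0) (hM : ∀ j, 0 < M j) :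
    IntegrableOn (fun s : ℝ => s ^ (-2 : ℤ) * ∑ j, c j * Real.exp (-s * M j)) (Set.Ioi 0) ∧
    (∫ s in Set.Ioi (0 : ℝ), s ^ (-2 : ℤ) * ∑ j, c j * Real.exp (-s * M j)) =
      ∑ j, c j * M j * Real.log (M j) := by
  have hj := fun j => frullani_piece (hM j)
  have key : ∀ s ∈ Set.Ioi (0:ℝ),
      s ^ (-2 : ℤ) * ∑ j, c j * Real.exp (-s * M j)
        = ∑ j, c j * ((Real.exp (-(s * M j)) - Real.exp (-s)) / s^2
            + (M j - 1) * Real.exp (-s) / s) := by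
    intro s hs
    have hs0 : (s:ℝ) ≠ 0 := ne_of_gt hs
    have hz : (s:ℝ) ^ (-2:ℤ) = (s^2)⁻¹ := by
      rw [zpow_neg]
      norm_cast
    rw [hz]
    rw [show (∑ j, c j * ((Real.exp (-(s * M j)) - Real.exp (-s)) / s^2
            + (M j - 1) * Real.exp (-s) / s))
        = ∑ j, ((s^2)⁻¹ * (c j * Real.exp (-s * M j))
            + (Real.exp (-s)/s) * (c j * M j)
            - ((s^2)⁻¹ * Real.exp (-s) + Real.exp (-s)/s) * c j) from
      Finset.sum_congr rfl fun j _ => by rw [neg_mul]; field_simp; ring]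
    rw [Finset.sum_sub_distrib, Finset.sum_add_distrib, ← Finset.mul_sum, ← Finset.mul_sum,
      ← Finset.mul_sum, hc, hcM]
    ring
  have hint : IntegrableOn (fun s : ℝ => ∑ j, c j * ((Real.exp (-(s * M j)) - Real.exp (-s)) / s^2
            + (M j - 1) * Real.exp (-s) / s)) (Set.Ioi 0) := by
    apply integrable_finset_sum
    intro j _
    exact ((hj j).1.const_mul (c j))
  constructor
  · exact IntegrableOn.congr_fun hint (fun s hs => (key s hs).symm) measurableSet_Ioi
  · rw [setIntegral_congr_fun measurableSet_Ioi key,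
      integral_finset_sum _ (fun j _ => ((hj j).1.const_mul (c j)))]
    have h1 : ∀ j, (∫ s in Set.Ioi (0:ℝ), c j * ((Real.exp (-(s * M j)) - Real.exp (-s)) / s^2
            + (M j - 1) * Real.exp (-s) / s)) = c j * (M j * Real.log (M j) - M j + 1) :=
      fun j => by rw [MeasureTheory.integral_const_mul, (hj j).2]
    rw [Finset.sum_congr rfl fun j _ => h1 j]
    have h2 : ∀ j ∈ Finset.univ, c j * (M j * Real.log (M j) - M j + 1)
        = c j * M j * Real.log (M j) - c j * M j + c j := fun j _ => by ring
    rw [Finset.sum_congr rfl h2, Finset.sum_add_distrib, Finset.sum_sub_distrib, hc, hcM]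
    ring
end

section
/- For every X > 0, the series Σ_{n=1}^∞ (−1)ⁿ ∫₀^∞ (1 − nX cosh t) e^{−nX cosh t} dt converges absolutely and its sum equals ∫₀^∞ e^{−X cosh t} (X cosh t − 1 − e^{−X cosh t}) / (1 + e^{−X cosh t})² dt. -/
open MeasureTheory Real Set

lemma aux13_absbd (b : ℝ) (hb : 0 ≤ b) :
    |(1 - b) * Real.exp (-b)| ≤ 2 * Real.exp (-(b / 2)) := by
  have h1 : |1 - b| ≤ 1 + b := abs_le.mpr ⟨by linarith, by linarith⟩
  have h2 : 1 + b ≤ 2 * Real.exp (b / 2) := by nlinarith [Real.add_one_le_exp (b / 2)]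
  have h3 : (2 * Real.exp (b / 2)) * Real.exp (-b) = 2 * Real.exp (-(b / 2)) := by
    rw [mul_assoc, ← Real.exp_add]; ring_nf
  calc |(1 - b) * Real.exp (-b)| = |1 - b| * Real.exp (-b) := by
        rw [abs_mul, abs_of_pos (Real.exp_pos _)]
    _ ≤ (2 * Real.exp (b / 2)) * Real.exp (-b) :=
        mul_le_mul_of_nonneg_right (h1.trans h2) (Real.exp_pos _).le
    _ = 2 * Real.exp (-(b / 2)) := h3

lemma aux13_cosh (t : ℝ) : (1 + t) / 2 ≤ Real.cosh t := by
  rw [Real.cosh_eq]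
  nlinarith [Real.add_one_le_exp t, Real.exp_pos (-t)]

lemma aux13_hasSum (a : ℝ) (ha : 0 < a) :
    HasSum (fun n : ℕ => (-1 : ℝ) ^ (n + 1) *
        ((1 - ((n : ℝ) + 1) * a) * Real.exp (-(((n : ℝ) + 1)) * a)))
      (Real.exp (-a) * (a - 1 - Real.exp (-a)) / (1 + Real.exp (-a)) ^ 2) := by
  set y : ℝ := -Real.exp (-a) with hy
  have hlt : Real.exp (-a) < 1 := by
    rw [Real.exp_lt_one_iff]; linarith
  have hny : ‖y‖ < 1 := by
    rw [hy, norm_neg, Real.norm_eq_abs, abs_of_pos (Real.exp_pos _)]; exact hlt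
  have h1 : HasSum (fun m : ℕ => y ^ m) (1 - y)⁻¹ := hasSum_geometric_of_norm_lt_one hny
  have h2 : HasSum (fun m : ℕ => (m : ℝ) * y ^ m) (y / (1 - y) ^ 2) :=
    hasSum_coe_mul_geometric_of_norm_lt_one hny
  have h3 : HasSum (fun m : ℕ => (1 - (m : ℝ) * a) * y ^ m)
      ((1 - y)⁻¹ - a * (y / (1 - y) ^ 2)) := by
    have := h1.sub (h2.mul_left a)
    convert this using 2 with m
    · rfl
    ring
  have h4 : HasSum (fun n : ℕ => (1 - ((n : ℝ) + 1) * a) * y ^ (n + 1))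
      ((1 - y)⁻¹ - a * (y / (1 - y) ^ 2) - 1) := by
    have h5 : HasSum (fun n : ℕ => (fun m : ℕ => (1 - (m : ℝ) * a) * y ^ m) (n + 1))
        ((1 - y)⁻¹ - a * (y / (1 - y) ^ 2) - 1) :=
      (hasSum_nat_add_iff (f := fun m : ℕ => (1 - (m : ℝ) * a) * y ^ m) 1).mpr
        (by simpa using h3)
    have heq : (fun n : ℕ => (1 - ((n : ℝ) + 1) * a) * y ^ (n + 1))
        = fun n : ℕ => (fun m : ℕ => (1 - (m : ℝ) * a) * y ^ m) (n + 1) := by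
      funext n; push_cast; ring
    rw [heq]; exact h5
  have hD : (0 : ℝ) < 1 - y := by
    rw [hy]; have := Real.exp_pos (-a); linarith
  have hval : (1 - y)⁻¹ - a * (y / (1 - y) ^ 2) - 1
      = Real.exp (-a) * (a - 1 - Real.exp (-a)) / (1 + Real.exp (-a)) ^ 2 := by
    rw [hy, sub_neg_eq_add]
    have hE := Real.exp_pos (-a)
    have hE' : (1 + Real.exp (-a)) ≠ 0 := by positivity
    field_simp
    ring
  rw [← hval]
  convert h4 using 2 with n
  have : y ^ (n + 1) = (-1 : ℝ) ^ (n + 1) * Real.exp (-(((n : ℝ) + 1)) * a) := by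
    rw [hy, neg_pow, ← Real.exp_nat_mul]
    push_cast
    ring_nf
  rw [this]
  ring

/-- For `X > 0`, the series `Σ_{n=1}^∞ (−1)ⁿ ∫₀^∞ (1 − nX cosh t) e^{−nX cosh t} dt`
converges absolutely with sum
`∫₀^∞ e^{−X cosh t}(X cosh t − 1 − e^{−X cosh t})/(1 + e^{−X cosh t})² dt`. -/
theorem stmt13 (X : ℝ) (hX : 0 < X) :
    Summable (fun n : ℕ =>
      |∫ t in Set.Ioi (0 : ℝ),
        (1 - ((n : ℝ) + 1) * X * Real.cosh t) *
          Real.exp (-(((n : ℝ) + 1) * X) * Real.cosh t)|) ∧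
    (∑' n : ℕ, (-1 : ℝ) ^ (n + 1) *
        ∫ t in Set.Ioi (0 : ℝ),
          (1 - ((n : ℝ) + 1) * X * Real.cosh t) *
            Real.exp (-(((n : ℝ) + 1) * X) * Real.cosh t)) =
      ∫ t in Set.Ioi (0 : ℝ),
        Real.exp (-X * Real.cosh t) *
          (X * Real.cosh t - 1 - Real.exp (-X * Real.cosh t)) /
            (1 + Real.exp (-X * Real.cosh t)) ^ 2 := by
  set F : ℕ → ℝ → ℝ := fun n t =>
    (1 - ((n : ℝ) + 1) * X * Real.cosh t) * Real.exp (-(((n : ℝ) + 1) * X) * Real.cosh t) with hF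
  have key : ∀ (n : ℕ) (t : ℝ), 0 ≤ t →
      |F n t| ≤ 2 * Real.exp (-(((n : ℝ) + 1) * X / 4)) * Real.exp (-(X / 4) * t) := by
    intro n t ht
    have hc : (1 : ℝ) ≤ Real.cosh t := Real.one_le_cosh t
    have hn1 : (1 : ℝ) ≤ (n : ℝ) + 1 := by
      have := Nat.cast_nonneg (α := ℝ) n; linarith
    have hb0 : 0 ≤ ((n : ℝ) + 1) * X * Real.cosh t := by positivity
    have h1 : |F n t| ≤ 2 * Real.exp (-((((n : ℝ) + 1) * X * Real.cosh t) / 2)) := by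
      have := aux13_absbd (((n : ℝ) + 1) * X * Real.cosh t) hb0
      simpa [hF, mul_assoc] using this
    refine h1.trans ?_
    have hexp : 2 * Real.exp (-(((n : ℝ) + 1) * X / 4)) * Real.exp (-(X / 4) * t)
        = 2 * Real.exp (-(((n : ℝ) + 1) * X / 4) + -(X / 4) * t) := by
      rw [mul_assoc, ← Real.exp_add]
    rw [hexp]
    have h3 : ((n : ℝ) + 1) * X * ((1 + t) / 2) ≤ ((n : ℝ) + 1) * X * Real.cosh t := by
      have h2 : (1 + t) / 2 ≤ Real.cosh t := aux13_cosh t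
      gcongr
    have hle : -((((n : ℝ) + 1) * X * Real.cosh t) / 2)
        ≤ -(((n : ℝ) + 1) * X / 4) + -(X / 4) * t := by
      nlinarith [h3, mul_nonneg (mul_nonneg (sub_nonneg.mpr hn1) hX.le) ht]
    exact mul_le_mul_of_nonneg_left (Real.exp_le_exp.mpr hle) (by norm_num)
  have hFmeas : ∀ n : ℕ, Continuous (F n) := by
    intro n; rw [hF]; fun_prop
  have hFint : ∀ n : ℕ, IntegrableOn (F n) (Set.Ioi (0 : ℝ)) := by
    intro n
    have hint : IntegrableOn (fun t : ℝ => 2 * Real.exp (-(((n : ℝ) + 1) * X / 4)) *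
        Real.exp (-(X / 4) * t)) (Set.Ioi 0) :=
      (exp_neg_integrableOn_Ioi 0 (by positivity : (0:ℝ) < X / 4)).const_mul _
    refine Integrable.mono' hint (hFmeas n).aestronglyMeasurable ?_
    filter_upwards [ae_restrict_mem measurableSet_Ioi] with t ht
    rw [Real.norm_eq_abs]
    exact key n t (le_of_lt ht)
  set C : ℝ := ∫ t in Set.Ioi (0 : ℝ), 2 * Real.exp (-(X / 4) * t) with hC
  have hIbd : ∀ n : ℕ, (∫ t in Set.Ioi (0 : ℝ), ‖F n t‖)
      ≤ Real.exp (-(((n : ℝ) + 1) * X / 4)) * C := by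
    intro n
    have hint2 : IntegrableOn (fun t : ℝ => 2 * Real.exp (-(X / 4) * t)) (Set.Ioi 0) :=
      (exp_neg_integrableOn_Ioi 0 (by positivity : (0:ℝ) < X / 4)).const_mul _
    have h : (∫ t in Set.Ioi (0 : ℝ), ‖F n t‖)
        ≤ ∫ t in Set.Ioi (0 : ℝ),
            Real.exp (-(((n : ℝ) + 1) * X / 4)) * (2 * Real.exp (-(X / 4) * t)) := by
      refine setIntegral_mono_on (hFint n).norm (hint2.const_mul _) measurableSet_Ioi ?_
      intro t ht
      rw [Real.norm_eq_abs]
      calc |F n t| ≤ 2 * Real.exp (-(((n : ℝ) + 1) * X / 4)) * Real.exp (-(X / 4) * t) :=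
            key n t (le_of_lt ht)
        _ = Real.exp (-(((n : ℝ) + 1) * X / 4)) * (2 * Real.exp (-(X / 4) * t)) := by ring
    rwa [integral_const_mul] at h
  have hnormsum : Summable (fun n : ℕ => ∫ t in Set.Ioi (0 : ℝ), ‖F n t‖) := by
    have hr1 : Real.exp (-(X / 4)) < 1 := Real.exp_lt_one_iff.mpr (by linarith)
    have h0 : Summable (fun n : ℕ => Real.exp (-(X / 4)) ^ n) :=
      summable_geometric_of_lt_one (Real.exp_pos _).le hr1
    have hgeo : Summable (fun n : ℕ => Real.exp (-(((n : ℝ) + 1) * X / 4)) * C) := by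
      have h1 := (h0.mul_left (Real.exp (-(X / 4)))).mul_right C
      convert h1 using 2 with n
      congr 1
      rw [← pow_succ', ← Real.exp_nat_mul]
      congr 1
      push_cast
      ring
    exact hgeo.of_nonneg_of_le (fun n => integral_nonneg fun t => norm_nonneg _) hIbd
  constructor
  · refine hnormsum.of_nonneg_of_le (fun n => abs_nonneg _) (fun n => ?_)
    have hb := norm_integral_le_integral_norm (μ := volume.restrict (Set.Ioi 0)) (F n)
    simp only [Real.norm_eq_abs] at hb
    exact hb
  · -- move sign inside integral
    have hstep : (∑' n : ℕ, (-1 : ℝ) ^ (n + 1) * ∫ t in Set.Ioi (0 : ℝ), F n t)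
        = ∑' n : ℕ, ∫ t in Set.Ioi (0 : ℝ), (-1 : ℝ) ^ (n + 1) * F n t := by
      refine tsum_congr fun n => ?_
      rw [integral_const_mul]
    rw [hstep]
    have hGint : ∀ n : ℕ, IntegrableOn (fun t => (-1 : ℝ) ^ (n + 1) * F n t) (Set.Ioi (0 : ℝ)) :=
      fun n => (hFint n).const_mul _
    have hGnorm : Summable (fun n : ℕ =>
        ∫ t in Set.Ioi (0 : ℝ), ‖(-1 : ℝ) ^ (n + 1) * F n t‖) := by
      refine hnormsum.congr fun n => ?_
      refine integral_congr_ae (Filter.Eventually.of_forall fun t => ?_)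
      simp [norm_mul, abs_pow]
    rw [integral_tsum_of_summable_integral_norm hGint hGnorm]
    refine setIntegral_congr_fun measurableSet_Ioi fun t ht => ?_
    have ha : 0 < X * Real.cosh t := by
      have := Real.one_le_cosh t; nlinarith
    have hs := (aux13_hasSum (X * Real.cosh t) ha).tsum_eq
    simp only [neg_mul]
    rw [← hs]
    refine tsum_congr fun n => ?_
    rw [hF]
    ring_nf
end

section
/- Fix k ∈ ℝ³ and set m₀ = 1, c₀ = 1. For each n ∈ ℕ let 1 < m₁⁽ⁿ⁾ < m₂⁽ⁿ⁾ with m₁⁽ⁿ⁾ → ∞, define c₁⁽ⁿ⁾ = (1 − (m₂⁽ⁿ⁾)²)/((m₂⁽ⁿ⁾)² − (m₁⁽ⁿ⁾)²) and c₂⁽ⁿ⁾ = ((m₁⁽ⁿ⁾)² − 1)/((m₂⁽ⁿ⁾)² − (m₁⁽ⁿ⁾)²), and assume sup_n (|c₁⁽ⁿ⁾| + |c₂⁽ⁿ⁾|) < ∞. Define M⁰_n(k) = −(2/π) ∫₀¹ Σⱼ₌₀² cⱼ⁽ⁿ⁾ log((mⱼ⁽ⁿ⁾)² + u(1−u)|k|²)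 · u(1−u) du and Λ_n > 0 by log(Λ_n²) = −Σⱼ₌₀² cⱼ⁽ⁿ⁾ log((mⱼ⁽ⁿ⁾)²). Then lim_{n→∞} ( (2/(3π)) log Λ_n − M⁰_n(k) ) = U(k), where U(k) = (|k|²/(4π)) ∫₀¹ (z² − z⁴/3)/(1 + |k|²(1−z²)/4) dz. -/
open Set MeasureTheory intervalIntegral

lemma aux_pos {t a x : ℝ} (ht : 0 ≤ t) (ha : 0 < a) (h0 : 0 ≤ x) (h1 : x ≤ 1) :
    0 < a + x*(1-x)*t := by
  have h := mul_nonneg (mul_nonneg h0 (by linarith : (0:ℝ) ≤ 1 - x)) ht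
  linarith

lemma aux_integrable {t a : ℝ} (ht : 0 ≤ t) (ha : 0 < a) :
    IntegrableOn (fun u : ℝ => Real.log (a + u*(1-u)*t) * (u*(1-u))) (Ioo 0 1) := by
  have hc : ContinuousOn (fun u : ℝ => Real.log (a + u*(1-u)*t) * (u*(1-u))) (Icc 0 1) := by
    apply ContinuousOn.mul
    · apply ContinuousOn.log
      · fun_prop
      · intro x hx; exact (aux_pos ht ha hx.1 hx.2).ne'
    · fun_prop
  exact hc.integrableOn_Icc.mono_set Ioo_subset_Icc_self

lemma int_w : ∫ u in Ioo (0:ℝ) 1, u*(1-u) = 1/6 := by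
  rw [← integral_Ioc_eq_integral_Ioo, ← intervalIntegral.integral_of_le zero_le_one]
  have h : (fun u : ℝ => u*(1-u)) = fun u : ℝ => u - u^2 := by funext u; ring
  rw [h, intervalIntegral.integral_sub ((by fun_prop : Continuous (fun u:ℝ => u)).intervalIntegrable 0 1)
    ((by fun_prop : Continuous (fun u:ℝ => u^2)).intervalIntegrable 0 1)]
  simp [integral_id, integral_pow]
  norm_num

lemma aux_split {m t : ℝ} (hm : 1 ≤ m) (ht : 0 ≤ t) :
    ∫ u in Ioo (0:ℝ) 1, Real.log (m^2 + u*(1-u)*t) * (u*(1-u))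
      = Real.log (m^2) / 6
        + ∫ u in Ioo (0:ℝ) 1, Real.log (1 + u*(1-u)*(t/m^2)) * (u*(1-u)) := by
  have hm0 : (0:ℝ) < m := lt_of_lt_of_le one_pos hm
  have hm2 : (0:ℝ) < m^2 := by positivity
  have hcong : EqOn (fun u : ℝ => Real.log (m^2 + u*(1-u)*t) * (u*(1-u)))
      (fun u : ℝ => Real.log (m^2) * (u*(1-u)) + Real.log (1 + u*(1-u)*(t/m^2)) * (u*(1-u)))
      (Ioo 0 1) := by
    intro u hu
    obtain ⟨hu0, hu1⟩ := hu
    have hw : 0 ≤ u*(1-u) := by nlinarith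
    have h2 : (0:ℝ) < 1 + u*(1-u)*(t/m^2) := by positivity
    have harg : m^2 + u*(1-u)*t = m^2 * (1 + u*(1-u)*(t/m^2)) := by
      field_simp
    simp only
    rw [harg, Real.log_mul hm2.ne' h2.ne']
    ring
  rw [setIntegral_congr_fun measurableSet_Ioo hcong]
  have hi1 : IntegrableOn (fun u : ℝ => Real.log (m^2) * (u*(1-u))) (Ioo 0 1) := by
    have : Continuous (fun u : ℝ => Real.log (m^2) * (u*(1-u))) := by fun_prop
    exact this.integrableOn_Icc.mono_set Ioo_subset_Icc_self
  have hi2 := aux_integrable (t := t/m^2) (a := 1) (by positivity) one_pos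
  rw [integral_add hi1 hi2, MeasureTheory.integral_const_mul, int_w]
  ring

lemma aux_bound {s : ℝ} (hs : 0 ≤ s) :
    |∫ u in Ioo (0:ℝ) 1, Real.log (1 + u*(1-u)*s) * (u*(1-u))| ≤ s := by
  have hi := aux_integrable (t := s) (a := 1) hs one_pos
  have h := norm_setIntegral_le_of_norm_le_const (μ := volume) (s := Ioo (0:ℝ) 1)
    (f := fun u : ℝ => Real.log (1 + u*(1-u)*s) * (u*(1-u))) (C := s)
    (by rw [Real.volume_Ioo]; exact ENNReal.ofReal_lt_top)
    ?_
  · rw [Real.volume_real_Ioo] at h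
    norm_num at h
    exact h
  · intro x hx
    obtain ⟨hx0, hx1⟩ := hx
    have hw0 : 0 ≤ x*(1-x) := by nlinarith
    have hw1 : x*(1-x) ≤ 1 := by nlinarith
    have hpos : (0:ℝ) < 1 + x*(1-x)*s := by positivity
    have hlog0 : 0 ≤ Real.log (1 + x*(1-x)*s) := Real.log_nonneg (by nlinarith)
    have hlogle : Real.log (1 + x*(1-x)*s) ≤ x*(1-x)*s := by
      have := Real.log_le_sub_one_of_pos hpos
      linarith
    rw [Real.norm_eq_abs]
    show |Real.log (1 + x*(1-x)*s) * (x*(1-x))| ≤ s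
    rw [abs_of_nonneg (by positivity)]
    have h3 : Real.log (1 + x*(1-x)*s) * (x*(1-x)) ≤ x*(1-x)*s*(x*(1-x)) :=
      mul_le_mul_of_nonneg_right hlogle hw0
    nlinarith [mul_nonneg hw0 hs]


lemma key_identity {t : ℝ} (ht : 0 ≤ t) :
    2/Real.pi * ∫ u in Ioo (0:ℝ) 1, Real.log ((1:ℝ)^2 + u*(1-u)*t) * (u*(1-u))
    = t/(4*Real.pi) * ∫ z in Ioo (0:ℝ) 1, (z^2 - z^4/3)/(1 + t*(1-z^2)/4) := by
  have huIcc : uIcc (0:ℝ) 1 = Icc 0 1 := uIcc_of_le zero_le_one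
  have hmIcc : uIcc (-1:ℝ) 1 = Icc (-1) 1 := uIcc_of_le (by norm_num)
  have hDpos : ∀ x ∈ Icc (0:ℝ) 1, 0 < 1 + x*(1-x)*t := by
    intro x hx
    have h := mul_nonneg (mul_nonneg hx.1 (by linarith [hx.2] : (0:ℝ) ≤ 1 - x)) ht
    linarith
  set Q := ∫ x in (0:ℝ)..1, (2*x-1)^2*(1+2*x-2*x^2)/(1+x*(1-x)*t) with hQdef
  have e1 : (∫ u in Ioo (0:ℝ) 1, Real.log ((1:ℝ)^2 + u*(1-u)*t) * (u*(1-u)))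
      = ∫ u in (0:ℝ)..1, Real.log (1 + u*(1-u)*t) * (u*(1-u)) := by
    rw [intervalIntegral.integral_of_le zero_le_one, integral_Ioc_eq_integral_Ioo]
    simp only [one_pow]
  have e2 : (∫ z in Ioo (0:ℝ) 1, (z^2 - z^4/3)/(1 + t*(1-z^2)/4))
      = ∫ z in (0:ℝ)..1, (z^2 - z^4/3)/(1 + t*(1-z^2)/4) := by
    rw [intervalIntegral.integral_of_le zero_le_one, integral_Ioc_eq_integral_Ioo]
  rw [e1, e2]
  -- integration by parts
  set f : ℝ → ℝ := fun x => (1-2*x)*t/(1+x*(1-x)*t) * (x^2/2 - x^3/3) with hfdef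
  have hfcont' : ContinuousOn (fun x : ℝ => (1-2*x)*t/(1+x*(1-x)*t)) (Icc 0 1) := by
    apply ContinuousOn.div (by fun_prop) (by fun_prop)
    intro x hx; exact (hDpos x hx).ne'
  have hfcont : ContinuousOn f (Icc 0 1) := hfcont'.mul (by fun_prop)
  have hIBP : (∫ x in (0:ℝ)..1, Real.log (1 + x*(1-x)*t) * (x*(1-x)))
      = - ∫ x in (0:ℝ)..1, f x := by
    have h := intervalIntegral.integral_mul_deriv_eq_deriv_mul
      (a := 0) (b := 1)
      (u := fun x => Real.log (1+x*(1-x)*t)) (u' := fun x => (1-2*x)*t/(1+x*(1-x)*t))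
      (v := fun x => x^2/2 - x^3/3) (v' := fun x => x*(1-x))
      (fun x hx => by
        rw [huIcc] at hx
        have hD : HasDerivAt (fun x : ℝ => 1+x*(1-x)*t) ((1-2*x)*t) x := by
          have h1 : HasDerivAt (fun x : ℝ => x*(1-x)) (1*(1-x) + x*(-1)) x :=
            (hasDerivAt_id x).mul ((hasDerivAt_id x).const_sub 1)
          have h2 := (h1.mul_const t).const_add 1
          refine h2.congr_deriv ?_
          ring
        exact hD.log (hDpos x hx).ne')
      (fun x _ => by
        have h1 : HasDerivAt (fun x : ℝ => x^2/2 - x^3/3)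
            ((↑2*x^(2-1))/2 - (↑3*x^(3-1))/3) x :=
          ((hasDerivAt_pow 2 x).div_const 2).sub ((hasDerivAt_pow 3 x).div_const 3)
        refine h1.congr_deriv ?_
        push_cast
        ring)
      ((hfcont'.mono (by rw [huIcc])).intervalIntegrable)
      ((by fun_prop : Continuous (fun x : ℝ => x*(1-x))).intervalIntegrable 0 1)
    rw [h]
    norm_num
    rfl
  -- reflection
  have hrefl : (∫ x in (0:ℝ)..1, f x) = ∫ x in (0:ℝ)..1, f (1-x) := by
    have h := intervalIntegral.integral_comp_sub_left (a := 0) (b := 1) f 1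
    simp only [sub_self, sub_zero] at h
    exact h.symm
  have hf_int : IntervalIntegrable f volume 0 1 := by
    apply ContinuousOn.intervalIntegrable; rw [huIcc]; exact hfcont
  have hfr_int : IntervalIntegrable (fun x => f (1-x)) volume 0 1 := by
    apply ContinuousOn.intervalIntegrable; rw [huIcc]
    exact hfcont.comp (by fun_prop)
      (fun x hx => ⟨by linarith [hx.2], by linarith [hx.1]⟩)
  have hcongsum : EqOn (fun x => f x + f (1-x))
      (fun x : ℝ => -(t/6) * ((2*x-1)^2*(1+2*x-2*x^2)/(1+x*(1-x)*t))) (uIcc 0 1) := by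
    intro x hx
    rw [huIcc] at hx
    have h1 : (1+x*(1-x)*t) ≠ 0 := (hDpos x hx).ne'
    have hd : 1+(1-x)*(1-(1-x))*t = 1+x*(1-x)*t := by ring
    show (1-2*x)*t/(1+x*(1-x)*t) * (x^2/2 - x^3/3)
        + (1-2*(1-x))*t/(1+(1-x)*(1-(1-x))*t) * ((1-x)^2/2 - (1-x)^3/3)
      = -(t/6) * ((2*x-1)^2*(1+2*x-2*x^2)/(1+x*(1-x)*t))
    rw [hd]
    field_simp
    ring
  have h2I : (∫ x in (0:ℝ)..1, f x) = -(t/12) * Q := by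
    have hsum : (∫ x in (0:ℝ)..1, f x) + ∫ x in (0:ℝ)..1, f (1-x)
        = ∫ x in (0:ℝ)..1, (f x + f (1-x)) := (integral_add hf_int hfr_int).symm
    rw [intervalIntegral.integral_congr hcongsum, intervalIntegral.integral_const_mul] at hsum
    rw [← hrefl] at hsum
    rw [hQdef]
    linarith
  -- substitution z = 2x-1 on the RHS
  have hgcont : ContinuousOn (fun z : ℝ => (z^2 - z^4/3)/(1 + t*(1-z^2)/4)) (Icc (-1) 1) := by
    apply ContinuousOn.div (by fun_prop) (by fun_prop)
    intro x hx
    have hx2 : x^2 ≤ 1 := by nlinarith [hx.1, hx.2]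
    nlinarith
  have hgint : ∀ a b : ℝ, a ∈ Icc (-1:ℝ) 1 → b ∈ Icc (-1:ℝ) 1 →
      IntervalIntegrable (fun z : ℝ => (z^2 - z^4/3)/(1 + t*(1-z^2)/4)) volume a b := by
    intro a b ha hb
    apply ContinuousOn.intervalIntegrable
    apply hgcont.mono
    rw [← hmIcc]
    exact uIcc_subset_uIcc (by rw [hmIcc]; exact ha) (by rw [hmIcc]; exact hb)
  have h := intervalIntegral.integral_comp_mul_add
    (a := 0) (b := 1) (fun z : ℝ => (z^2 - z^4/3)/(1 + t*(1-z^2)/4)) two_ne_zero (-1)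
  norm_num at h
  have hsplit : (∫ z in (-1:ℝ)..1, (z^2 - z^4/3)/(1 + t*(1-z^2)/4))
      = (∫ z in (-1:ℝ)..0, (z^2 - z^4/3)/(1 + t*(1-z^2)/4))
        + ∫ z in (0:ℝ)..1, (z^2 - z^4/3)/(1 + t*(1-z^2)/4) :=
    (intervalIntegral.integral_add_adjacent_intervals
      (hgint _ _ (by norm_num) (by norm_num)) (hgint _ _ (by norm_num) (by norm_num))).symm
  have hneg : (∫ z in (-1:ℝ)..0, (z^2 - z^4/3)/(1 + t*(1-z^2)/4))
      = ∫ z in (0:ℝ)..1, (z^2 - z^4/3)/(1 + t*(1-z^2)/4) := by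
    have h2 := intervalIntegral.integral_comp_neg (a := 0) (b := 1)
      (fun z : ℝ => (z^2 - z^4/3)/(1 + t*(1-z^2)/4))
    norm_num at h2
    rw [← h2]
  rw [hsplit, hneg] at h
  have hptw : EqOn (fun x : ℝ => ((2*x + -1)^2 - (2*x + -1)^4/3)/(1 + t*(1-(2*x + -1)^2)/4))
      (fun x : ℝ => (2/3) * ((2*x-1)^2*(1+2*x-2*x^2)/(1+x*(1-x)*t))) (uIcc 0 1) := by
    intro x hx
    rw [huIcc] at hx
    have h1 : (1+x*(1-x)*t) ≠ 0 := (hDpos x hx).ne'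
    have hd : 1 + t*(1-(2*x + -1)^2)/4 = 1+x*(1-x)*t := by ring
    show ((2*x + -1)^2 - (2*x + -1)^4/3)/(1 + t*(1-(2*x + -1)^2)/4)
        = (2/3) * ((2*x-1)^2*(1+2*x-2*x^2)/(1+x*(1-x)*t))
    rw [hd]
    field_simp
    ring
  rw [intervalIntegral.integral_congr hptw, intervalIntegral.integral_const_mul] at h
  have hX : (∫ z in (0:ℝ)..1, (z^2 - z^4/3)/(1 + t*(1-z^2)/4)) = (2/3)*Q := by linarith
  rw [hIBP, h2I, hX]
  ring


/-- Serber–Uehling limit: with `m₀ = 1`, `c₀ = 1`, Pauli–Villars masses `1 < m₁⁽ⁿ⁾ < m₂⁽ⁿ⁾`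
with `m₁⁽ⁿ⁾ → ∞`, coefficients `c₁⁽ⁿ⁾, c₂⁽ⁿ⁾` given by the Pauli–Villars conditions and
uniformly bounded, multiplier `M⁰_n(k)` and averaged cut-off `Λ_n` defined by
`log Λ_n² = −Σⱼ cⱼ⁽ⁿ⁾ log (mⱼ⁽ⁿ⁾)²`, one has
`(2/(3π)) log Λ_n − M⁰_n(k) → U(k)`. -/
theorem stmt16 (k : EuclideanSpace ℝ (Fin 3)) (m₁ m₂ c₁ c₂ Λ : ℕ → ℝ)
    (hm : ∀ n, 1 < m₁ n ∧ m₁ n < m₂ n)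
    (hm₁ : Filter.Tendsto m₁ Filter.atTop Filter.atTop)
    (hc₁ : ∀ n, c₁ n = (1 - (m₂ n) ^ 2) / ((m₂ n) ^ 2 - (m₁ n) ^ 2))
    (hc₂ : ∀ n, c₂ n = ((m₁ n) ^ 2 - 1) / ((m₂ n) ^ 2 - (m₁ n) ^ 2))
    (hbdd : ∃ C : ℝ, ∀ n, |c₁ n| + |c₂ n| ≤ C)
    (hΛpos : ∀ n, 0 < Λ n)
    (hΛ : ∀ n, Real.log ((Λ n) ^ 2) =
      -((1 : ℝ) * Real.log ((1 : ℝ) ^ 2) + c₁ n * Real.log ((m₁ n) ^ 2) +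
        c₂ n * Real.log ((m₂ n) ^ 2))) :
    Filter.Tendsto (fun n =>
        2 / (3 * Real.pi) * Real.log (Λ n) -
          (-(2 / Real.pi) * ∫ u in Set.Ioo (0 : ℝ) 1,
            ((1 : ℝ) * Real.log ((1 : ℝ) ^ 2 + u * (1 - u) * ‖k‖ ^ 2) +
              c₁ n * Real.log ((m₁ n) ^ 2 + u * (1 - u) * ‖k‖ ^ 2) +
              c₂ n * Real.log ((m₂ n) ^ 2 + u * (1 - u) * ‖k‖ ^ 2)) * (u * (1 - u))))
      Filter.atTop
      (nhds (‖k‖ ^ 2 / (4 * Real.pi) *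
        ∫ z in Set.Ioo (0 : ℝ) 1,
          (z ^ 2 - z ^ 4 / 3) / (1 + ‖k‖ ^ 2 * (1 - z ^ 2) / 4))) := by
  set t : ℝ := ‖k‖ ^ 2 with htdef
  have ht : 0 ≤ t := by positivity
  obtain ⟨C, hC⟩ := hbdd
  have hC0 : (0:ℝ) ≤ C := le_trans (by positivity) (hC 0)
  set A : ℝ := ∫ u in Set.Ioo (0:ℝ) 1, Real.log ((1:ℝ)^2 + u*(1-u)*t) * (u*(1-u)) with hAdef
  -- per-n rewriting of the expression
  have hEn : ∀ n, 2 / (3 * Real.pi) * Real.log (Λ n) -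
          (-(2 / Real.pi) * ∫ u in Set.Ioo (0 : ℝ) 1,
            ((1 : ℝ) * Real.log ((1 : ℝ) ^ 2 + u * (1 - u) * t) +
              c₁ n * Real.log ((m₁ n) ^ 2 + u * (1 - u) * t) +
              c₂ n * Real.log ((m₂ n) ^ 2 + u * (1 - u) * t)) * (u * (1 - u)))
      = 2/Real.pi * A +
        2/Real.pi * (c₁ n * (∫ u in Set.Ioo (0:ℝ) 1,
            Real.log (1 + u*(1-u)*(t/(m₁ n)^2)) * (u*(1-u)))
          + c₂ n * (∫ u in Set.Ioo (0:ℝ) 1,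
            Real.log (1 + u*(1-u)*(t/(m₂ n)^2)) * (u*(1-u)))) := by
    intro n
    have h1 : (1:ℝ) < m₁ n := (hm n).1
    have h2 : (1:ℝ) < m₂ n := h1.trans (hm n).2
    have hfun : (fun u : ℝ => ((1:ℝ) * Real.log ((1:ℝ)^2 + u*(1-u)*t) +
          c₁ n * Real.log ((m₁ n)^2 + u*(1-u)*t) +
          c₂ n * Real.log ((m₂ n)^2 + u*(1-u)*t)) * (u*(1-u)))
        = (fun u : ℝ => Real.log ((1:ℝ)^2 + u*(1-u)*t) * (u*(1-u)) +
            (c₁ n * (Real.log ((m₁ n)^2 + u*(1-u)*t) * (u*(1-u))) +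
             c₂ n * (Real.log ((m₂ n)^2 + u*(1-u)*t) * (u*(1-u))))) := by
      funext u; ring
    rw [hfun]
    have i0 : IntegrableOn (fun u : ℝ => Real.log ((1:ℝ)^2 + u*(1-u)*t) * (u*(1-u)))
        (Set.Ioo 0 1) volume := aux_integrable ht (by norm_num)
    have i1 : IntegrableOn (fun u : ℝ => Real.log ((m₁ n)^2 + u*(1-u)*t) * (u*(1-u)))
        (Set.Ioo 0 1) volume := aux_integrable ht (pow_pos (by linarith) 2)
    have i2 : IntegrableOn (fun u : ℝ => Real.log ((m₂ n)^2 + u*(1-u)*t) * (u*(1-u)))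
        (Set.Ioo 0 1) volume := aux_integrable ht (pow_pos (by linarith) 2)
    have i1' : IntegrableOn (fun u : ℝ =>
        c₁ n * (Real.log ((m₁ n)^2 + u*(1-u)*t) * (u*(1-u)))) (Set.Ioo 0 1) volume :=
      i1.const_mul _
    have i2' : IntegrableOn (fun u : ℝ =>
        c₂ n * (Real.log ((m₂ n)^2 + u*(1-u)*t) * (u*(1-u)))) (Set.Ioo 0 1) volume :=
      i2.const_mul _
    have i12 : IntegrableOn (fun u : ℝ =>
        c₁ n * (Real.log ((m₁ n)^2 + u*(1-u)*t) * (u*(1-u)))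
        + c₂ n * (Real.log ((m₂ n)^2 + u*(1-u)*t) * (u*(1-u)))) (Set.Ioo 0 1) volume :=
      i1'.add i2'
    rw [MeasureTheory.integral_add i0 i12,
      MeasureTheory.integral_add i1' i2',
      MeasureTheory.integral_const_mul, MeasureTheory.integral_const_mul,
      aux_split h1.le ht, aux_split h2.le ht]
    have hΛn := hΛ n
    have hlogΛ : Real.log (Λ n) =
        -(c₁ n * Real.log (m₁ n) + c₂ n * Real.log (m₂ n)) := by
      simp only [Real.log_pow] at hΛn
      push_cast at hΛn
      simp only [Real.log_one, one_pow] at hΛn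
      linarith
    rw [hlogΛ, Real.log_pow, Real.log_pow]
    push_cast
    rw [← hAdef]
    ring
  -- the remainder tends to zero
  have hr : Filter.Tendsto (fun n =>
      2/Real.pi * (c₁ n * (∫ u in Set.Ioo (0:ℝ) 1,
          Real.log (1 + u*(1-u)*(t/(m₁ n)^2)) * (u*(1-u)))
        + c₂ n * (∫ u in Set.Ioo (0:ℝ) 1,
          Real.log (1 + u*(1-u)*(t/(m₂ n)^2)) * (u*(1-u)))))
      Filter.atTop (nhds 0) := by
    have hπ : (0:ℝ) < Real.pi := Real.pi_pos
    apply squeeze_zero_norm (a := fun n => 2/Real.pi*C*t * (((m₁ n)^2)⁻¹))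
    · intro n
      have h1 : (1:ℝ) < m₁ n := (hm n).1
      have h2 : (1:ℝ) < m₂ n := h1.trans (hm n).2
      have hp1 : (0:ℝ) < (m₁ n)^2 := pow_pos (by linarith) 2
      have hp2 : (0:ℝ) < (m₂ n)^2 := pow_pos (by linarith) 2
      have hb1 : |∫ u in Set.Ioo (0:ℝ) 1,
          Real.log (1 + u*(1-u)*(t/(m₁ n)^2)) * (u*(1-u))| ≤ t/(m₁ n)^2 :=
        aux_bound (by positivity)
      have hb2 : |∫ u in Set.Ioo (0:ℝ) 1,
          Real.log (1 + u*(1-u)*(t/(m₂ n)^2)) * (u*(1-u))| ≤ t/(m₂ n)^2 :=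
        aux_bound (by positivity)
      have hmono : t/(m₂ n)^2 ≤ t/(m₁ n)^2 := by
        apply div_le_div_of_nonneg_left ht hp1
        nlinarith [(hm n).2]
      have htri : |c₁ n * (∫ u in Set.Ioo (0:ℝ) 1,
            Real.log (1 + u*(1-u)*(t/(m₁ n)^2)) * (u*(1-u)))
          + c₂ n * (∫ u in Set.Ioo (0:ℝ) 1,
            Real.log (1 + u*(1-u)*(t/(m₂ n)^2)) * (u*(1-u)))|
          ≤ C * (t/(m₁ n)^2) := by
        have hCn := hC n
        have e1 := abs_nonneg (c₁ n)
        have e2 := abs_nonneg (c₂ n)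
        calc _ ≤ |c₁ n * (∫ u in Set.Ioo (0:ℝ) 1,
              Real.log (1 + u*(1-u)*(t/(m₁ n)^2)) * (u*(1-u)))|
            + |c₂ n * (∫ u in Set.Ioo (0:ℝ) 1,
              Real.log (1 + u*(1-u)*(t/(m₂ n)^2)) * (u*(1-u)))| := abs_add_le _ _
          _ ≤ C * (t/(m₁ n)^2) := by
              rw [abs_mul, abs_mul]
              have hd1 : (0:ℝ) ≤ t/(m₁ n)^2 := by positivity
              nlinarith [mul_le_mul_of_nonneg_left hb1 e1,
                mul_le_mul_of_nonneg_left (hb2.trans hmono) e2]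
      rw [Real.norm_eq_abs, abs_mul, abs_of_nonneg (by positivity : (0:ℝ) ≤ 2/Real.pi)]
      calc 2/Real.pi * |_| ≤ 2/Real.pi * (C * (t/(m₁ n)^2)) := by
            exact mul_le_mul_of_nonneg_left htri (by positivity)
        _ = 2/Real.pi*C*t * (((m₁ n)^2)⁻¹) := by ring
    · have h1 : Filter.Tendsto (fun n => (m₁ n)^2) Filter.atTop Filter.atTop := by
        apply Filter.tendsto_atTop_mono (fun n => ?_) hm₁
        have := (hm n).1
        nlinarith
      have h2 := h1.inv_tendsto_atTop
      have h3 := h2.const_mul (2/Real.pi*C*t)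
      simpa using h3
  -- assemble
  have hlim : Filter.Tendsto (fun n =>
      2/Real.pi * A +
        2/Real.pi * (c₁ n * (∫ u in Set.Ioo (0:ℝ) 1,
            Real.log (1 + u*(1-u)*(t/(m₁ n)^2)) * (u*(1-u)))
          + c₂ n * (∫ u in Set.Ioo (0:ℝ) 1,
            Real.log (1 + u*(1-u)*(t/(m₂ n)^2)) * (u*(1-u)))))
      Filter.atTop (nhds (2/Real.pi * A + 0)) :=
    Filter.Tendsto.add tendsto_const_nhds hr
  rw [add_zero] at hlim
  have hval : 2/Real.pi * A
      = t/(4*Real.pi) * ∫ z in Set.Ioo (0:ℝ) 1, (z^2 - z^4/3)/(1 + t*(1-z^2)/4) := by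
    rw [hAdef]; exact key_identity ht
  have hfinal := Filter.Tendsto.congr (fun n => (hEn n).symm) hlim
  rwa [hval] at hfinal
end

section
/- Let c₀, c₁, c₂ be real numbers and m₀, m₁, m₂ > 0 with Σⱼ₌₀² cⱼ mⱼ² = 0, and let A ≥ 0. Then the function s ↦ Σⱼ₌₀² cⱼ mⱼ² e^{−s(mⱼ²+A)} (1/(2s) − (mⱼ²+A)) is Lebesgue integrable on (0,∞) and ∫₀^∞ Σⱼ₌₀² cⱼ mⱼ² e^{−s(mⱼ²+A)} (1/(2s) − (mⱼ²+A)) ds = −(1/2) Σⱼ₌₀² cⱼ mⱼ² log(mⱼ² + A). -/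
open MeasureTheory Set Real


lemma myexp_Ioi_integral {t : ℝ} (ht : 0 < t) :
    ∫ s in Ioi (0:ℝ), Real.exp (-(t*s)) = 1/t := by
  have := integral_comp_mul_left_Ioi (fun x => Real.exp (-x)) 0 ht
  simp only [mul_zero] at this
  calc ∫ s in Ioi (0:ℝ), Real.exp (-(t*s))
      = t⁻¹ • ∫ x in Ioi (0:ℝ), Real.exp (-x) := this
    _ = 1/t := by rw [integral_exp_neg_Ioi_zero]; simp [one_div]

lemma myexp_Ioc_integral {s a b : ℝ} (hs : 0 < s) (hab : a ≤ b) :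
    ∫ t in Ioc a b, Real.exp (-(s*t)) = (Real.exp (-(s*a)) - Real.exp (-(s*b)))/s := by
  rw [← intervalIntegral.integral_of_le hab]
  have hderiv : ∀ t ∈ Set.uIcc a b, HasDerivAt (fun t => -(Real.exp (-(s*t))/s))
      (Real.exp (-(s*t))) t := by
    intro t _
    have h1 : HasDerivAt (fun t : ℝ => -(s*t)) (-s) t := by
      simpa using ((hasDerivAt_id t).const_mul s).fun_neg
    have := (h1.exp.div_const s).fun_neg
    rw [show Real.exp (-(s*t)) = -(Real.exp (-(s*t)) * -s / s) by
      rw [mul_neg, neg_div, neg_neg, mul_div_assoc, div_self hs.ne', mul_one]]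
    exact this
  rw [intervalIntegral.integral_eq_sub_of_hasDerivAt hderiv
    ((Real.continuous_exp.comp (by continuity)).intervalIntegrable a b)]
  field_simp
  ring

lemma mybound {s a b : ℝ} (hs : 0 < s) (hab : a ≤ b) :
    0 ≤ (Real.exp (-(s*a)) - Real.exp (-(s*b)))/s ∧
    (Real.exp (-(s*a)) - Real.exp (-(s*b)))/s ≤ (b-a) * Real.exp (-(a*s)) := by
  have hx : 0 ≤ s*(b-a) := mul_nonneg hs.le (by linarith)
  have h1 : 1 - Real.exp (-(s*(b-a))) ≤ s*(b-a) := by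
    nlinarith [Real.add_one_le_exp (-(s*(b-a)))]
  have h0 : 0 ≤ 1 - Real.exp (-(s*(b-a))) := by
    have : Real.exp (-(s*(b-a))) ≤ Real.exp 0 := Real.exp_le_exp.2 (by linarith)
    simp only [Real.exp_zero] at this
    linarith
  have hsplit : Real.exp (-(s*b)) = Real.exp (-(s*a)) * Real.exp (-(s*(b-a))) := by
    rw [← Real.exp_add]; ring_nf
  constructor
  · apply div_nonneg _ hs.le
    nlinarith [Real.exp_pos (-(s*a))]
  · rw [div_le_iff₀ hs, hsplit, mul_comm a s]
    nlinarith [Real.exp_pos (-(s*a))]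

lemma myfrullani {a b : ℝ} (ha : 0 < a) (hab : a ≤ b) :
    IntegrableOn (fun s => (Real.exp (-(s*a)) - Real.exp (-(s*b)))/s) (Ioi (0:ℝ)) ∧
    ∫ s in Ioi (0:ℝ), (Real.exp (-(s*a)) - Real.exp (-(s*b)))/s
      = Real.log b - Real.log a := by
  set F : ℝ → ℝ := fun s => (Real.exp (-(s*a)) - Real.exp (-(s*b)))/s with hF
  have hFmeas : AEStronglyMeasurable F (volume.restrict (Ioi (0:ℝ))) := by
    apply Measurable.aestronglyMeasurable
    fun_prop
  have hFint : IntegrableOn F (Ioi (0:ℝ)) := by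
    refine Integrable.mono' ((exp_neg_integrableOn_Ioi 0 ha).const_mul (b-a)) hFmeas ?_
    filter_upwards [ae_restrict_mem measurableSet_Ioi] with s hs
    have := mybound hs hab
    rw [Real.norm_eq_abs, abs_of_nonneg this.1, neg_mul]
    exact this.2
  refine ⟨hFint, ?_⟩
  -- Fubini
  set μ := volume.restrict (Ioi (0:ℝ))
  set ν := volume.restrict (Ioc a b)
  set f : ℝ → ℝ → ℝ := fun s t => Real.exp (-(s*t)) with hf
  have hmeas : AEStronglyMeasurable (Function.uncurry f) (μ.prod ν) := by
    apply Continuous.aestronglyMeasurable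
    have : Function.uncurry f = fun p : ℝ × ℝ => Real.exp (-(p.1*p.2)) := rfl
    rw [this]
    exact Real.continuous_exp.comp (continuous_fst.mul continuous_snd).neg
  have hint : Integrable (Function.uncurry f) (μ.prod ν) := by
    rw [integrable_prod_iff hmeas]
    constructor
    · filter_upwards [ae_restrict_mem measurableSet_Ioi] with s hs
      exact (Continuous.integrableOn_Ioc (by continuity))
    · apply hFint.congr_fun_ae
      filter_upwards [ae_restrict_mem measurableSet_Ioi] with s hs
      have := myexp_Ioc_integral hs hab
      show F s = ∫ t, ‖f s t‖ ∂ν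
      simp only [hf, Real.norm_eq_abs, abs_of_pos (Real.exp_pos _)]
      exact this.symm
  have hswap := integral_integral_swap hint
  have hL : ∫ s, (∫ t, f s t ∂ν) ∂μ = ∫ s in Ioi (0:ℝ), F s := by
    apply setIntegral_congr_fun measurableSet_Ioi
    intro s hs
    exact myexp_Ioc_integral hs hab
  have hR : ∫ t, (∫ s, f s t ∂μ) ∂ν = Real.log b - Real.log a := by
    have : ∫ t, (∫ s, f s t ∂μ) ∂ν = ∫ t in Ioc a b, 1/t := by
      apply setIntegral_congr_fun measurableSet_Ioc
      intro t ht
      have ht0 : 0 < t := lt_trans ha ht.1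
      simpa [hf, mul_comm] using myexp_Ioi_integral ht0
    rw [this, ← intervalIntegral.integral_of_le hab, integral_one_div, Real.log_div (by linarith) (by linarith)]
    intro h
    rw [Set.uIcc_of_le hab] at h
    exact absurd h.1 (by linarith)
  rw [← hL, hswap, hR]

/-- Building block of `Γ⁰₂(k)`: if `Σⱼ cⱼ mⱼ² = 0`, `mⱼ > 0` and `A ≥ 0`, then
`s ↦ Σⱼ cⱼ mⱼ² e^{−s(mⱼ²+A)}(1/(2s) − (mⱼ²+A))` is integrable on `(0,∞)` with integral
`−(1/2) Σⱼ cⱼ mⱼ² log(mⱼ² + A)`. -/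
theorem stmt19 (c m : Fin 3 → ℝ) (hm : ∀ j, 0 < m j)
    (hc : ∑ j, c j * m j ^ 2 = 0) (A : ℝ) (hA : 0 ≤ A) :
    IntegrableOn
      (fun s : ℝ => ∑ j, c j * m j ^ 2 * Real.exp (-s * (m j ^ 2 + A)) *
        (1 / (2 * s) - (m j ^ 2 + A))) (Set.Ioi 0) ∧
    (∫ s in Set.Ioi (0 : ℝ), ∑ j, c j * m j ^ 2 * Real.exp (-s * (m j ^ 2 + A)) *
        (1 / (2 * s) - (m j ^ 2 + A))) =
      -(1 / 2) * ∑ j, c j * m j ^ 2 * Real.log (m j ^ 2 + A) := by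
  have hc' := hc
  rw [Fin.sum_univ_three] at hc'
  set b : Fin 3 → ℝ := fun j => m j ^ 2 + A with hbdef
  have hb : ∀ j, 0 < b j := fun j => by have := hm j; simp only [hbdef]; positivity
  set r : ℝ := min (b 0) (min (b 1) (b 2)) with hrdef
  have hr0 : 0 < r := lt_min (hb 0) (lt_min (hb 1) (hb 2))
  have hrle : ∀ j, r ≤ b j := by
    intro j
    fin_cases j
    · exact min_le_left _ _
    · exact le_trans (min_le_right _ _) (min_le_left _ _)
    · exact le_trans (min_le_right _ _) (min_le_right _ _)
  have hfr := fun j => myfrullani hr0 (hrle j)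
  have hexpint : ∀ j, IntegrableOn (fun s => b j * Real.exp (-(s * b j))) (Ioi (0:ℝ)) := by
    intro j
    exact IntegrableOn.congr_fun ((exp_neg_integrableOn_Ioi 0 (hb j)).const_mul (b j))
      (fun s _ => by rw [neg_mul, mul_comm s (b j)]) measurableSet_Ioi
  have hexpval : ∀ j, ∫ s in Ioi (0:ℝ), b j * Real.exp (-(s * b j)) = 1 := by
    intro j
    rw [MeasureTheory.integral_const_mul]
    have h2 : (fun s : ℝ => Real.exp (-(s * b j))) = fun s => Real.exp (-(b j * s)) := by
      funext s; rw [mul_comm]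
    rw [h2, myexp_Ioi_integral (hb j), one_div, mul_inv_cancel₀ (hb j).ne']
  set G : ℝ → ℝ := fun s => ∑ j, ((-(c j * m j ^ 2) / 2) *
      ((Real.exp (-(s*r)) - Real.exp (-(s*(b j))))/s)
      - (c j * m j ^ 2) * (b j * Real.exp (-(s * b j)))) with hG
  have hterm : ∀ j : Fin 3, IntegrableOn (fun s => (-(c j * m j ^ 2) / 2) *
      ((Real.exp (-(s*r)) - Real.exp (-(s*(b j))))/s)
      - (c j * m j ^ 2) * (b j * Real.exp (-(s * b j)))) (Ioi (0:ℝ)) := by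
    intro j
    exact ((hfr j).1.const_mul _).sub ((hexpint j).const_mul _)
  have hGint : IntegrableOn G (Ioi (0:ℝ)) := by
    rw [hG]
    exact integrable_finset_sum _ (fun j _ => hterm j)
  have hEq : Set.EqOn (fun s : ℝ => ∑ j, c j * m j ^ 2 * Real.exp (-s * (m j ^ 2 + A)) *
      (1 / (2 * s) - (m j ^ 2 + A))) G (Ioi 0) := by
    intro s hs
    have hs0 : (s:ℝ) ≠ 0 := ne_of_gt hs
    simp only [hG, Fin.sum_univ_three, hbdef]
    field_simp
    ring_nf
    linear_combination (Real.exp (-(s*r))) * hc'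
  constructor
  · exact hGint.congr_fun hEq.symm measurableSet_Ioi
  · rw [setIntegral_congr_fun measurableSet_Ioi hEq, hG,
      MeasureTheory.integral_finset_sum _ (fun j _ => hterm j)]
    have hval : ∀ j : Fin 3, (∫ s in Ioi (0:ℝ), ((-(c j * m j ^ 2) / 2) *
        ((Real.exp (-(s*r)) - Real.exp (-(s*(b j))))/s)
        - (c j * m j ^ 2) * (b j * Real.exp (-(s * b j)))))
        = (-(c j * m j ^ 2) / 2) * (Real.log (b j) - Real.log r) - (c j * m j ^ 2) := by
      intro j
      rw [MeasureTheory.integral_sub ((hfr j).1.const_mul _) ((hexpint j).const_mul _),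
        MeasureTheory.integral_const_mul, MeasureTheory.integral_const_mul,
        (hfr j).2, hexpval j, mul_one]
    simp only [hval]
    rw [Fin.sum_univ_three, Fin.sum_univ_three]
    simp only [hbdef]
    linear_combination (Real.log r / 2 - 1) * hc'
end
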